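/- arXiv:2211.05513 — 2 statements merged into one kernel-verified Lean document; each statement's English description precedes it below -/
import Mathlib

section
/- Fix R ∈ (0,1) and let r_m be the canonical radius sequence determined by R. Then for every fixed integer j ≥ 0, lim_{m→∞} C(m−j, ≤ r_m)/2^{m−j} = R, where C(m−j, ≤ r_m) := Σ_{i=0}^{r_m} C(m−j, i) and C(a,b) is the binomial coefficient (taken over m > j). -/
set_option maxHeartbeats 1000000
open Finset Filter MeasureTheory Real Set
open scoped Topology

namespace Stmt16


/-- `2*(n/2)+1 - n ≥ 0` style fact over ℝ. -/
lemma half_facts (n : ℕ) : (n : ℝ) - 1 ≤ 2 * (n / 2 : ℕ) ∧ (2 * (n / 2 : ℕ) : ℝ) ≤ n := by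
  obtain ⟨k, hk⟩ := Nat.even_or_odd' n
  rcases hk with h | h <;> subst h <;> simp [Nat.mul_div_cancel_left, Nat.mul_add_div] <;> push_cast <;> ring_nf <;> norm_num

lemma choose_succ_real (n h : ℕ) (hh : h < n) :
    (n.choose (h + 1) : ℝ) = (n.choose h : ℝ) * (((n : ℝ) - h) / (h + 1)) := by
  have key := Nat.choose_succ_right_eq n h
  have : ((n.choose (h + 1) : ℝ)) * ((h : ℝ) + 1) = (n.choose h : ℝ) * ((n : ℝ) - h) := by
    have := congrArg (fun x : ℕ => (x : ℝ)) key
    push_cast [Nat.cast_sub hh.le] at this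
    linarith [this]
  have hpos : ((h : ℝ) + 1) ≠ 0 := by positivity
  field_simp at this ⊢
  linarith [this]

lemma prod_formula (n : ℕ) : ∀ i, n / 2 ≤ i → i ≤ n →
    (n.choose i : ℝ) = (n.choose (n / 2) : ℝ) * ∏ h ∈ Finset.Ico (n / 2) i, (((n : ℝ) - h) / (h + 1)) := by
  intro i
  induction i with
  | zero => intro h1 _; have h0 : n / 2 = 0 := Nat.le_zero.mp h1; rw [h0]; simp
  | succ i ih =>
    intro h1 h2
    rcases Nat.lt_or_ge (n / 2) (i + 1) with hlt | hge
    · have hle : n / 2 ≤ i := Nat.lt_succ_iff.mp hlt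
      rw [Finset.prod_Ico_succ_top hle, choose_succ_real n i h2,
        ih hle (le_of_lt h2)]
      ring
    · have : n / 2 = i + 1 := le_antisymm h1 hge
      rw [this]; simp

lemma sum_formula (n : ℕ) : ∀ i, n / 2 ≤ i →
    (∑ h ∈ Finset.Ico (n / 2) i, (2 * (h : ℝ) + 1 - n)) =
      ((i : ℝ) - (n / 2 : ℕ)) * ((i : ℝ) + (n / 2 : ℕ) - n) := by
  intro i
  induction i with
  | zero => intro h1; have : n / 2 = 0 := Nat.le_zero.mp h1; rw [this]; simp
  | succ i ih =>
    intro h1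
    rcases Nat.lt_or_ge (n / 2) (i + 1) with hlt | hge
    · have hle : n / 2 ≤ i := Nat.lt_succ_iff.mp hlt
      rw [Finset.sum_Ico_succ_top hle, ih hle]
      push_cast; ring
    · have : n / 2 = i + 1 := le_antisymm h1 hge
      rw [this]; simp



variable {n i : ℕ}

lemma choose_upper (n i : ℕ) (h1 : n / 2 ≤ i) (h2 : i ≤ n)
    (W : ℝ) (hW : W = ((i : ℝ) - (n/2:ℕ)) * ((i : ℝ) + (n/2:ℕ) - n))
    (hpf : (n.choose i : ℝ) = (n.choose (n / 2) : ℝ) * ∏ h ∈ Finset.Ico (n / 2) i, (((n : ℝ) - h) / (h + 1)))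
    (hsf : (∑ h ∈ Finset.Ico (n / 2) i, (2 * (h : ℝ) + 1 - n)) = W) :
    (n.choose i : ℝ) ≤ (n.choose (n / 2) : ℝ) * Real.exp (-W / i) := by
  rw [hpf]
  have hc0 : (0:ℝ) ≤ (n.choose (n/2) : ℝ) := by positivity
  refine mul_le_mul_of_nonneg_left ?_ hc0
  have hM := half_facts n
  calc ∏ h ∈ Finset.Ico (n / 2) i, (((n : ℝ) - h) / (h + 1))
      ≤ ∏ h ∈ Finset.Ico (n / 2) i, Real.exp (-(2 * (h:ℝ) + 1 - n) / i) := by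
        refine Finset.prod_le_prod (fun h hh => ?_) (fun h hh => ?_)
        · obtain ⟨hh1, hh2⟩ := Finset.mem_Ico.mp hh
          have hhn : (h:ℝ) ≤ (n:ℝ) - 1 := by
            have : h < n := lt_of_lt_of_le hh2 h2
            have : (h:ℝ) + 1 ≤ n := by exact_mod_cast this
            linarith
          apply div_nonneg (by linarith) (by positivity)
        · obtain ⟨hh1, hh2⟩ := Finset.mem_Ico.mp hh
          have hhM : ((n/2:ℕ):ℝ) ≤ h := by exact_mod_cast hh1
          have hx0 : (0:ℝ) ≤ 2 * (h:ℝ) + 1 - n := by linarith [hM.1]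
          have hhi : (h:ℝ) + 1 ≤ i := by exact_mod_cast hh2
          have hi0 : (0:ℝ) < i := by
            have : 0 < i := Nat.lt_of_le_of_lt (Nat.zero_le h) hh2
            exact_mod_cast this
          have hstep1 : (2 * (h:ℝ) + 1 - n) / i ≤ (2 * (h:ℝ) + 1 - n) / ((h:ℝ)+1) := by
            gcongr
          have hstep2 : ((n : ℝ) - h) / (h + 1) ≤ Real.exp (-(2 * (h:ℝ) + 1 - n) / ((h:ℝ)+1)) := by
            have hexp := Real.add_one_le_exp (-(2 * (h:ℝ) + 1 - n) / ((h:ℝ)+1))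
            have hp : (0:ℝ) < (h:ℝ) + 1 := by positivity
            have : ((n : ℝ) - h) / (h + 1) = -(2 * (h:ℝ) + 1 - n) / ((h:ℝ)+1) + 1 := by
              field_simp; ring
            rw [this]; exact hexp
          refine hstep2.trans (Real.exp_le_exp.mpr ?_)
          rw [neg_div, neg_div, neg_le_neg_iff]
          exact hstep1
    _ = Real.exp (∑ h ∈ Finset.Ico (n / 2) i, -(2 * (h:ℝ) + 1 - n) / i) := (Real.exp_sum _ _).symm
    _ = Real.exp (-W / i) := by
        congr 1
        simp only [neg_div]
        rw [Finset.sum_neg_distrib, ← Finset.sum_div, hsf]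

lemma choose_lower (n i : ℕ) (h1 : n / 2 ≤ i) (h2 : i ≤ n)
    (b : ℝ) (hbdef : b = (2*(i:ℝ) - 1 - n) / ((n/2:ℕ) + 1)) (hb : b ≤ 1/2)
    (W : ℝ) (hW : W = ((i : ℝ) - (n/2:ℕ)) * ((i : ℝ) + (n/2:ℕ) - n))
    (hpf : (n.choose i : ℝ) = (n.choose (n / 2) : ℝ) * ∏ h ∈ Finset.Ico (n / 2) i, (((n : ℝ) - h) / (h + 1)))
    (hsf : (∑ h ∈ Finset.Ico (n / 2) i, (2 * (h : ℝ) + 1 - n)) = W) :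
    (n.choose (n / 2) : ℝ) * Real.exp (-((1 + 2*b) * W) / ((n/2:ℕ) + 1)) ≤ (n.choose i : ℝ) := by
  rw [hpf]
  have hc0 : (0:ℝ) ≤ (n.choose (n/2) : ℝ) := by positivity
  refine mul_le_mul_of_nonneg_left ?_ hc0
  have hM := half_facts n
  calc Real.exp (-((1 + 2*b) * W) / ((n/2:ℕ) + 1))
      = Real.exp (∑ h ∈ Finset.Ico (n / 2) i, -((1 + 2*b) * (2 * (h:ℝ) + 1 - n)) / ((n/2:ℕ) + 1)) := by
        congr 1
        have hkey : ∑ h ∈ Finset.Ico (n / 2) i, ((1 + 2*b) * (2 * (h:ℝ) + 1 - n)) / (((n/2:ℕ):ℝ) + 1)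
            = (1 + 2*b) * W / (((n/2:ℕ):ℝ) + 1) := by
          rw [← Finset.sum_div, ← Finset.mul_sum, hsf]
        simp only [neg_div]
        rw [Finset.sum_neg_distrib, hkey]
    _ = ∏ h ∈ Finset.Ico (n / 2) i, Real.exp (-((1 + 2*b) * (2 * (h:ℝ) + 1 - n)) / ((n/2:ℕ) + 1)) :=
        Real.exp_sum _ _
    _ ≤ ∏ h ∈ Finset.Ico (n / 2) i, (((n : ℝ) - h) / (h + 1)) := by
        refine Finset.prod_le_prod (fun h hh => (Real.exp_pos _).le) (fun h hh => ?_)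
        obtain ⟨hh1, hh2⟩ := Finset.mem_Ico.mp hh
        have hhM : ((n/2:ℕ):ℝ) ≤ h := by exact_mod_cast hh1
        have hhi : (h:ℝ) + 1 ≤ i := by exact_mod_cast hh2
        have hp : (0:ℝ) < (h:ℝ) + 1 := by positivity
        have hMp : (0:ℝ) < ((n/2:ℕ):ℝ) + 1 := by positivity
        set x : ℝ := (2 * (h:ℝ) + 1 - n) / ((h:ℝ)+1) with hxdef
        have hx0 : (0:ℝ) ≤ x := by
          apply div_nonneg _ hp.le; linarith [hM.1]
        have hxb : x ≤ b := by
          rw [hxdef, hbdef]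
          have hnum : 2 * (h:ℝ) + 1 - n ≤ 2*(i:ℝ) - 1 - n := by linarith
          calc (2 * (h:ℝ) + 1 - n) / ((h:ℝ)+1) ≤ (2*(i:ℝ) - 1 - n) / ((h:ℝ)+1) := by gcongr
            _ ≤ (2*(i:ℝ) - 1 - n) / (((n/2:ℕ):ℝ) + 1) := by
                gcongr <;> linarith [hM.1, hhi]
        have hxhalf : x ≤ 1/2 := le_trans hxb hb
        have h1x : (0:ℝ) < 1 - x := by linarith
        -- factor equals 1 - x
        have hfac : ((n : ℝ) - h) / (h + 1) = 1 - x := by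
          rw [hxdef]; field_simp; ring
        rw [hfac]
        -- step A : exp (-(x/(1-x))) ≤ 1 - x
        have hA : Real.exp (-(x/(1-x))) ≤ 1 - x := by
          rw [Real.exp_neg, inv_le_comm₀ (Real.exp_pos _) h1x]
          have hid : (1-x)⁻¹ = x/(1-x) + 1 := by field_simp; ring
          rw [hid]; exact Real.add_one_le_exp _
        -- step B : exponent comparison
        have hB : -((1 + 2*b) * (2 * (h:ℝ) + 1 - n)) / (((n/2:ℕ):ℝ) + 1) ≤ -(x/(1-x)) := by
          rw [neg_div, neg_le_neg_iff]
          have hxM : x ≤ (2 * (h:ℝ) + 1 - n) / (((n/2:ℕ):ℝ) + 1) := by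
            rw [hxdef]; gcongr <;> linarith [hM.1]
          have hb0 : 0 ≤ b := le_trans hx0 hxb
          have hfrac : x/(1-x) ≤ x * (1 + 2*b) := by
            rw [div_le_iff₀ h1x]
            have hh1' := mul_nonneg (mul_nonneg hx0 (by linarith : (0:ℝ) ≤ 1 - x)) (sub_nonneg.mpr hxb)
            have hh2' := mul_nonneg (mul_nonneg hx0 hx0) (by linarith : (0:ℝ) ≤ 1 - 2*x)
            nlinarith [hh1', hh2']
          calc x/(1-x) ≤ x * (1 + 2*b) := hfrac
            _ ≤ ((2 * (h:ℝ) + 1 - n) / (((n/2:ℕ):ℝ) + 1)) * (1 + 2*b) := by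
                apply mul_le_mul_of_nonneg_right hxM; linarith
            _ = ((1 + 2*b) * (2 * (h:ℝ) + 1 - n)) / (((n/2:ℕ):ℝ) + 1) := by ring
        exact le_trans (Real.exp_le_exp.mpr hB) hA



noncomputable def cc (n : ℕ) : ℝ := (n.choose (n/2) : ℝ)

noncomputable def II (n : ℕ) (t : ℝ) : ℤ := ⌊((n:ℝ) + Real.sqrt n * t + 1)/2⌋

noncomputable def phi (n : ℕ) (t : ℝ) : ℝ :=
  if 0 ≤ II n t then (n.choose (II n t).toNat : ℝ) / cc n else 0

noncomputable def xx (n i : ℕ) : ℝ := (2*(i:ℝ) - 1 - n)/Real.sqrt n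

lemma mem_Ico_iff (n : ℕ) (hn : 1 ≤ n) (i : ℕ) (t : ℝ) :
    t ∈ Set.Ico (xx n i) (xx n (i+1)) ↔ II n t = (i : ℤ) := by
  have hs : (0:ℝ) < Real.sqrt n := Real.sqrt_pos.mpr (by exact_mod_cast hn)
  have h1 : xx n i ≤ t ↔ 2*(i:ℝ) - 1 - n ≤ Real.sqrt n * t := by
    rw [xx, div_le_iff₀ hs]; constructor <;> intro h <;> nlinarith
  have h2 : t < xx n (i+1) ↔ Real.sqrt n * t < 2*((i:ℝ)+1) - 1 - n := by
    rw [xx, lt_div_iff₀ hs]; push_cast; constructor <;> intro h <;> nlinarith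
  have h3 : II n t = (i:ℤ) ↔ ((i:ℝ) ≤ ((n:ℝ) + Real.sqrt n * t + 1)/2 ∧
      ((n:ℝ) + Real.sqrt n * t + 1)/2 < (i:ℝ) + 1) := by
    rw [II, Int.floor_eq_iff]
    · constructor <;> intro h <;> exact ⟨by exact_mod_cast h.1, by exact_mod_cast h.2⟩
  rw [Set.mem_Ico, h1, h2, h3]
  constructor <;> intro h <;> constructor <;> [linarith [h.1]; linarith [h.2]; linarith [h.1]; linarith [h.2]]


noncomputable def chi (n K : ℕ) (t : ℝ) : ℝ := if II n t ≤ (K:ℤ) then phi n t else 0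

lemma chi_eq (n K : ℕ) (hn : 1 ≤ n) :
    chi n K = fun t => ∑ i ∈ range (K+1),
      ((n.choose i : ℝ)/cc n) * Set.indicator (Set.Ico (xx n i) (xx n (i+1))) (fun _ => 1) t := by
  funext t
  rcases le_or_gt (II n t) (K:ℤ) with hle | hgt
  · rcases le_or_gt 0 (II n t) with h0 | h0
    · -- II n t = some i in [0, K]
      set v : ℕ := (II n t).toNat with hv
      have hvI : II n t = (v:ℤ) := (Int.toNat_of_nonneg h0).symm
      have hvK : v ≤ K := by omega
      have hmem : v ∈ range (K+1) := Finset.mem_range.mpr (Nat.lt_succ_of_le hvK)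
      rw [Finset.sum_eq_single v]
      · have : t ∈ Set.Ico (xx n v) (xx n (v+1)) := (mem_Ico_iff n hn v t).mpr hvI
        rw [Set.indicator_of_mem this, chi, if_pos hle, phi, if_pos h0, mul_one]
      · intro b hb hbv
        have : t ∉ Set.Ico (xx n b) (xx n (b+1)) := by
          intro hmem'
          have hbI := (mem_Ico_iff n hn b t).mp hmem'
          rw [hvI] at hbI
          exact hbv (by exact_mod_cast hbI.symm)
        rw [Set.indicator_of_notMem this, mul_zero]
      · intro hnot; exact absurd hmem hnot
    · rw [chi, if_pos hle, phi, if_neg (not_le.mpr h0)]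
      symm
      apply Finset.sum_eq_zero
      intro b hb
      have : t ∉ Set.Ico (xx n b) (xx n (b+1)) := by
        intro hmem'
        have := (mem_Ico_iff n hn b t).mp hmem'
        omega
      rw [Set.indicator_of_notMem this, mul_zero]
  · rw [chi, if_neg (not_le.mpr hgt)]
    symm
    apply Finset.sum_eq_zero
    intro b hb
    have hbK : b ≤ K := Nat.lt_succ_iff.mp (Finset.mem_range.mp hb)
    have : t ∉ Set.Ico (xx n b) (xx n (b+1)) := by
      intro hmem'
      have := (mem_Ico_iff n hn b t).mp hmem'
      omega
    rw [Set.indicator_of_notMem this, mul_zero]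

lemma indicator_integrable (n i : ℕ) :
    Integrable (fun t => Set.indicator (Set.Ico (xx n i) (xx n (i+1))) (fun _ => (1:ℝ)) t) := by
  have : Integrable (Set.indicator (Set.Ico (xx n i) (xx n (i+1))) (fun _ => (1:ℝ))) := by
    rw [MeasureTheory.integrable_indicator_iff measurableSet_Ico]
    apply (integrableOn_const_iff (C := (1:ℝ))).mpr
    right
    exact measure_Ico_lt_top
  exact this

lemma chi_integrable (n K : ℕ) (hn : 1 ≤ n) : Integrable (chi n K) := by
  rw [chi_eq n K hn]
  apply integrable_finset_sum
  intro i _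
  exact (indicator_integrable n i).const_mul _

lemma xx_gap (n i : ℕ) (hn : 1 ≤ n) : xx n (i+1) - xx n i = 2 / Real.sqrt n := by
  have hs : (0:ℝ) < Real.sqrt n := Real.sqrt_pos.mpr (by exact_mod_cast hn)
  rw [xx, xx, div_sub_div_same]
  push_cast; ring_nf

lemma chi_integral (n K : ℕ) (hn : 1 ≤ n) :
    ∫ t, chi n K t = (2 / Real.sqrt n) * ((∑ i ∈ range (K+1), (n.choose i : ℝ)) / cc n) := by
  have hs : (0:ℝ) < Real.sqrt n := Real.sqrt_pos.mpr (by exact_mod_cast hn)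
  have hxle : ∀ i : ℕ, xx n i ≤ xx n (i+1) := by
    intro i
    have := xx_gap n i hn
    nlinarith [this, div_pos (by norm_num : (0:ℝ) < 2) hs]
  rw [chi_eq n K hn, integral_finset_sum _ (fun i _ => (indicator_integrable n i).const_mul _)]
  have : ∀ i ∈ range (K+1), ∫ t, ((n.choose i : ℝ)/cc n) *
      Set.indicator (Set.Ico (xx n i) (xx n (i+1))) (fun _ => (1:ℝ)) t
      = ((n.choose i : ℝ)/cc n) * (2 / Real.sqrt n) := by
    intro i _
    rw [MeasureTheory.integral_const_mul]
    congr 1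
    have : ∫ t, Set.indicator (Set.Ico (xx n i) (xx n (i+1))) (fun _ => (1:ℝ)) t
        = ((volume (Set.Ico (xx n i) (xx n (i+1)))).toReal : ℝ) • (1:ℝ) := by
      exact MeasureTheory.integral_indicator_const (1:ℝ) measurableSet_Ico
    rw [this, Real.volume_Ico, smul_eq_mul, mul_one, ENNReal.toReal_ofReal (by linarith [hxle i] : (0:ℝ) ≤ xx n (i+1) - xx n i), xx_gap n i hn]
  rw [Finset.sum_congr rfl this, ← Finset.sum_mul, Finset.sum_div, mul_comm]


lemma cc_pos (n : ℕ) : 0 < cc n := by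
  have := Nat.choose_pos (Nat.div_le_self n 2)
  rw [cc]; exact_mod_cast this

lemma helper_tail (n i : ℕ) (hn : 1 ≤ n) (s : ℝ) (hs6 : 6 ≤ s) (hiM : n/2 ≤ i) (hin : i ≤ n)
    (hlb : ((n:ℝ) + Real.sqrt n * s - 1)/2 ≤ i) :
    (n.choose i : ℝ) / cc n ≤ Real.exp (-s^2/16) := by
  have hup := choose_upper n i hiM hin _ rfl (prod_formula n i hiM hin) (sum_formula n i hiM)
  have hM := half_facts n
  have hccp := cc_pos n
  have hn0 : (0:ℝ) < (n:ℝ) := by exact_mod_cast hn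
  set u : ℝ := Real.sqrt n with hu
  have hu2 : u^2 = n := Real.sq_sqrt (by positivity)
  have hu0 : 0 < u := Real.sqrt_pos.mpr hn0
  have hn1 : (1:ℝ) ≤ n := by exact_mod_cast hn
  have hu1 : 1 ≤ u := by
    rw [hu, show (1:ℝ) = Real.sqrt 1 from (Real.sqrt_one).symm]
    exact Real.sqrt_le_sqrt hn1
  set Mr : ℝ := ((n/2:ℕ) : ℝ) with hMr
  set D : ℝ := (i:ℝ) - Mr with hD
  have hus : 6 ≤ u * s := by nlinarith
  have hDlb : (u*s - 1)/2 ≤ D := by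
    rw [hD]
    have h2M : Mr ≤ (n:ℝ)/2 := by rw [hMr]; linarith [hM.2]
    linarith [hlb]
  have hD1 : (u*s - 3)/2 ≤ D - 1 := by linarith
  have hDpos : 0 < D - 1 := by nlinarith
  set W : ℝ := ((i : ℝ) - Mr) * ((i : ℝ) + Mr - n) with hWdef
  have hWlb : (u*s-3)^2/4 ≤ W := by
    have h1 : D - 1 ≤ D + 2*Mr - n := by rw [hMr]; linarith [hM.1]
    have hWD : W = D * (D + 2*Mr - n) := by rw [hWdef, hD]; ring
    rw [hWD]
    nlinarith
  have hipos : (0:ℝ) < i := by nlinarith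
  have hiln : (i:ℝ) ≤ n := by exact_mod_cast hin
  have hW0 : (0:ℝ) ≤ W := le_trans (by positivity) hWlb
  have key : s^2/16 ≤ ((u*s-3)^2/4)/(n:ℝ) := by
    rw [div_le_div_iff₀ (by norm_num) hn0]
    nlinarith [mul_nonneg (by nlinarith : (0:ℝ) ≤ u*s-6) (by nlinarith : (0:ℝ) ≤ u*s-2)]
  have e2 : ((u*s-3)^2/4)/(n:ℝ) ≤ W/(n:ℝ) := by gcongr
  have e1 : W/(n:ℝ) ≤ W/(i:ℝ) := by gcongr
  have hWn : s^2/16 ≤ W / i := le_trans key (le_trans e2 e1)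
  have step : (n.choose i : ℝ) / cc n ≤ Real.exp (-W/(i:ℝ)) := by
    rw [div_le_iff₀ hccp]
    calc (n.choose i : ℝ) ≤ (n.choose (n / 2) : ℝ) * Real.exp (-W / i) := hup
      _ = Real.exp (-W/(i:ℝ)) * cc n := by rw [cc]; ring
  refine step.trans (Real.exp_le_exp.mpr ?_)
  rw [neg_div, neg_div, neg_le_neg_iff]
  exact hWn

lemma phi_nonneg (n : ℕ) (t : ℝ) : 0 ≤ phi n t := by
  rw [phi]; split
  · exact div_nonneg (by positivity) (cc_pos n).le
  · exact le_refl 0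
lemma phi_le_one (n : ℕ) (t : ℝ) : phi n t ≤ 1 := by
  rw [phi]; split
  · rw [div_le_one (cc_pos n), cc]
    exact_mod_cast Nat.choose_le_middle _ n
  · norm_num

lemma phi_tail (n : ℕ) (hn : 1 ≤ n) (t : ℝ) (ht : 6 ≤ |t|) :
    phi n t ≤ Real.exp (-t^2/16) := by
  have hn0 : (0:ℝ) < n := by exact_mod_cast hn
  have hn1 : (1:ℝ) ≤ n := by exact_mod_cast hn
  have hu0 : 0 < Real.sqrt n := Real.sqrt_pos.mpr hn0
  have hu1 : 1 ≤ Real.sqrt n := by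
    rw [show (1:ℝ) = Real.sqrt 1 from (Real.sqrt_one).symm]
    exact Real.sqrt_le_sqrt hn1
  rw [phi]
  split
  case isFalse h0 => positivity
  case isTrue h0 =>
    have hfl1 : ((II n t : ℤ):ℝ) ≤ ((n:ℝ) + Real.sqrt n * t + 1)/2 := Int.floor_le _
    have hfl2 : ((n:ℝ) + Real.sqrt n * t + 1)/2 - 1 < ((II n t : ℤ):ℝ) := Int.sub_one_lt_floor _
    have hcast : (((II n t).toNat : ℕ) : ℝ) = ((II n t : ℤ):ℝ) := by
      exact_mod_cast congrArg (fun z : ℤ => (z:ℝ)) (Int.toNat_of_nonneg h0)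
    set v : ℕ := (II n t).toNat with hv
    rcases le_or_gt 6 t with h6 | h6
    · -- right tail
      have hlb : ((n:ℝ) + Real.sqrt n * t - 1)/2 ≤ (v:ℝ) := by
        rw [hcast]; linarith
      rcases le_or_gt v n with hvn | hvn
      · have hiM : n/2 ≤ v := by
          have hst : 6 ≤ Real.sqrt n * t := by nlinarith
          have : (n:ℝ) < 2*(v:ℝ) := by linarith
          have : n < 2*v := by exact_mod_cast this
          omega
        exact helper_tail n v hn t h6 hiM hvn hlb
      · rw [Nat.choose_eq_zero_of_lt hvn]
        simp only [Nat.cast_zero, zero_div]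
        positivity
    · -- left tail
      have h6' : t ≤ -6 := by
        rcases abs_cases t with ⟨h, _⟩ | ⟨h, _⟩ <;> linarith
      have hst : Real.sqrt n * t ≤ -6 * Real.sqrt n := by nlinarith
      have hvy : (v:ℝ) ≤ ((n:ℝ) + 1 - 6*Real.sqrt n)/2 := by
        rw [hcast]; linarith
      have hvn : v ≤ n := by
        have : (v:ℝ) ≤ (n:ℝ) := by nlinarith
        exact_mod_cast this
      have hwr : ((n - v : ℕ) : ℝ) = (n:ℝ) - v := by
        rw [Nat.cast_sub hvn]
      have hsym : (n.choose v : ℝ) = (n.choose (n - v) : ℝ) := by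
        exact_mod_cast congrArg (fun k : ℕ => (k:ℝ)) (Nat.choose_symm hvn).symm
      rw [hsym]
      have hlb : ((n:ℝ) + Real.sqrt n * (-t) - 1)/2 ≤ ((n - v : ℕ):ℝ) := by
        rw [hwr, hcast]  -- careful: hcast rewrites v-cast
        have := hfl1
        nlinarith
      have hiM : n/2 ≤ n - v := by
        have h1 : (n:ℝ) < 2*((n:ℝ) - (v:ℝ)) := by nlinarith
        have h2 : (n:ℝ) < 2*((n - v:ℕ):ℝ) := by rw [hwr]; linarith
        have : n < 2*(n-v) := by exact_mod_cast h2
        omega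
      have hres := helper_tail n (n - v) hn (-t) (by linarith) hiM (Nat.sub_le n v) hlb
      have heq : (-t)^2 = t^2 := by ring
      rw [heq] at hres
      exact hres

lemma phi_le_bound (n : ℕ) (hn : 1 ≤ n) (t : ℝ) : phi n t ≤ Real.exp (9/4 - t^2/16) := by
  rcases le_or_gt 6 |t| with h | h
  · exact (phi_tail n hn t h).trans (Real.exp_le_exp.mpr (by linarith))
  · refine (phi_le_one n t).trans ?_
    rw [show (1:ℝ) = Real.exp 0 from (Real.exp_zero).symm]
    apply Real.exp_le_exp.mpr
    nlinarith [sq_abs t, abs_nonneg t]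

lemma bound_integrable : Integrable (fun t : ℝ => Real.exp (9/4 - t^2/16)) := by
  have h := (integrable_exp_neg_mul_sq (by norm_num : (0:ℝ) < 1/16)).const_mul (Real.exp (9/4 : ℝ))
  have heq : (fun t : ℝ => Real.exp (9/4 - t^2/16))
      = fun t : ℝ => Real.exp (9/4 : ℝ) * Real.exp (-(1/16) * t^2) := by
    funext t
    rw [← Real.exp_add]
    congr 1
    ring
  rw [heq]
  exact h

lemma tendsto_of_abs_le {f g : ℕ → ℝ} {a : ℝ} (h : ∀ᶠ n in atTop, |f n - a| ≤ g n)
    (hg : Tendsto g atTop (𝓝 0)) : Tendsto f atTop (𝓝 a) := by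
  rw [tendsto_iff_dist_tendsto_zero]
  apply squeeze_zero' (Eventually.of_forall fun n => dist_nonneg) ?_ hg
  filter_upwards [h] with n hn
  rw [Real.dist_eq]; exact hn

lemma sqrt_nat_atTop : Tendsto (fun n : ℕ => Real.sqrt n) atTop atTop := by
  apply Filter.tendsto_atTop_atTop.mpr
  intro b
  refine ⟨⌈b^2⌉₊ + 1, fun n hn => ?_⟩
  rcases le_or_gt b 0 with hb | hb
  · exact le_trans hb (Real.sqrt_nonneg _)
  · have h1 : b^2 ≤ (n:ℝ) := by
      have h0 := Nat.le_ceil (b^2)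
      have h2 : ((⌈b^2⌉₊:ℕ) : ℝ) ≤ n := by exact_mod_cast le_trans (Nat.le_succ _) hn
      linarith
    calc b = Real.sqrt (b^2) := (Real.sqrt_sq hb.le).symm
      _ ≤ Real.sqrt n := Real.sqrt_le_sqrt h1

lemma const_div_sqrt_zero (c : ℝ) : Tendsto (fun n : ℕ => c / Real.sqrt n) atTop (𝓝 0) :=
  Filter.Tendsto.div_atTop tendsto_const_nhds sqrt_nat_atTop

lemma const_div_nat_zero (c : ℝ) : Tendsto (fun n : ℕ => c / (n:ℝ)) atTop (𝓝 0) :=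
  Filter.Tendsto.div_atTop tendsto_const_nhds tendsto_natCast_atTop_atTop

lemma div_div_cancel_helper (x y n : ℝ) (hn : n ≠ 0) : (x/n)/(y/n) = x/y := by
  rcases eq_or_ne y 0 with h|h
  · simp [h]
  · field_simp

lemma pointwise_pos (s : ℝ) (hs : 0 ≤ s) (i : ℕ → ℕ)
    (hi : ∀ᶠ n in atTop, |2*((i n : ℝ)) - n - Real.sqrt n * s| ≤ 1) :
    Tendsto (fun n => (n.choose (i n) : ℝ) / cc n) atTop (𝓝 (Real.exp (-s^2/2))) := by
  have hn1 : ∀ᶠ n : ℕ in atTop, 1 ≤ n := eventually_ge_atTop 1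
  have hbig : ∀ᶠ n : ℕ in atTop, ((s+2)^2 : ℝ) ≤ n :=
    tendsto_natCast_atTop_atTop.eventually_ge_atTop _
  have hbasic : ∀ᶠ n : ℕ in atTop, (1:ℝ) ≤ Real.sqrt n ∧ (Real.sqrt n)^2 = n ∧
      s + 2 ≤ Real.sqrt n ∧ (n:ℝ) - 1 ≤ 2 * ((n/2:ℕ):ℝ) ∧ 2 * ((n/2:ℕ):ℝ) ≤ n := by
    filter_upwards [hn1, hbig] with n h1 h2
    have hn0 : (0:ℝ) < n := by exact_mod_cast h1
    refine ⟨?_, Real.sq_sqrt hn0.le, ?_, (half_facts n).1, (half_facts n).2⟩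
    · rw [show (1:ℝ) = Real.sqrt 1 from Real.sqrt_one.symm]
      exact Real.sqrt_le_sqrt (by exact_mod_cast h1)
    · calc s + 2 = Real.sqrt ((s+2)^2) := (Real.sqrt_sq (by linarith)).symm
        _ ≤ Real.sqrt n := Real.sqrt_le_sqrt h2
  have hnat : ∀ᶠ n in atTop, n/2 ≤ i n ∧ i n ≤ n := by
    filter_upwards [hi, hbasic] with n h1 hb
    obtain ⟨hu1, hu2, hsu, hMl, hMu⟩ := hb
    have habs := abs_le.mp h1
    constructor
    · have hx : (n:ℝ) ≤ 2*(i n) + 1 := by nlinarith [Real.sqrt_nonneg (n:ℝ)]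
      have hx2 : n ≤ 2 * i n + 1 := by exact_mod_cast hx
      omega
    · have hx : 2*((i n):ℝ) ≤ 2*(n:ℝ) := by nlinarith
      have hx2 : 2*(i n) ≤ 2*n := by exact_mod_cast hx
      omega
  have hAlim : Tendsto (fun n => ((i n : ℝ) - ((n/2:ℕ):ℝ))/Real.sqrt n) atTop (𝓝 (s/2)) := by
    apply tendsto_of_abs_le ?_ (const_div_sqrt_zero 1)
    filter_upwards [hi, hbasic] with n h1 hb
    obtain ⟨hu1, hu2, hsu, hMl, hMu⟩ := hb
    have hupos : (0:ℝ) < Real.sqrt n := by linarith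
    have habs := abs_le.mp h1
    have hid : ((i n : ℝ) - ((n/2:ℕ):ℝ))/Real.sqrt n - s/2
        = (2*((i n : ℝ) - ((n/2:ℕ):ℝ)) - Real.sqrt n * s)/(2 * Real.sqrt n) := by
      field_simp
    rw [hid, abs_div, abs_of_pos (by linarith : (0:ℝ) < 2 * Real.sqrt n),
      div_le_div_iff₀ (by linarith) hupos]
    have h2 : |2*((i n : ℝ) - ((n/2:ℕ):ℝ)) - Real.sqrt n * s| ≤ 2 := by
      rw [abs_le]; constructor <;> nlinarith
    nlinarith
  have hBlim : Tendsto (fun n => ((i n : ℝ) + ((n/2:ℕ):ℝ) - n)/Real.sqrt n) atTop (𝓝 (s/2)) := by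
    apply tendsto_of_abs_le ?_ (const_div_sqrt_zero 1)
    filter_upwards [hi, hbasic] with n h1 hb
    obtain ⟨hu1, hu2, hsu, hMl, hMu⟩ := hb
    have hupos : (0:ℝ) < Real.sqrt n := by linarith
    have habs := abs_le.mp h1
    have hid : ((i n : ℝ) + ((n/2:ℕ):ℝ) - n)/Real.sqrt n - s/2
        = (2*((i n : ℝ) + ((n/2:ℕ):ℝ) - n) - Real.sqrt n * s)/(2 * Real.sqrt n) := by
      field_simp
    rw [hid, abs_div, abs_of_pos (by linarith : (0:ℝ) < 2 * Real.sqrt n),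
      div_le_div_iff₀ (by linarith) hupos]
    have h2 : |2*((i n : ℝ) + ((n/2:ℕ):ℝ) - n) - Real.sqrt n * s| ≤ 2 := by
      rw [abs_le]; constructor <;> nlinarith
    nlinarith
  have hIlim : Tendsto (fun n => (i n : ℝ)/(n:ℝ)) atTop (𝓝 (1/2)) := by
    apply tendsto_of_abs_le ?_ (const_div_sqrt_zero (1+s))
    filter_upwards [hi, hbasic] with n h1 hb
    obtain ⟨hu1, hu2, hsu, hMl, hMu⟩ := hb
    have hupos : (0:ℝ) < Real.sqrt n := by linarith
    have hn0 : (0:ℝ) < n := by nlinarith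
    have habs := abs_le.mp h1
    have hid : (i n : ℝ)/(n:ℝ) - 1/2 = (2*(i n : ℝ) - n)/(2*(n:ℝ)) := by
      field_simp
    rw [hid, abs_div, abs_of_pos (by linarith : (0:ℝ) < 2*(n:ℝ)),
      div_le_div_iff₀ (by linarith) hupos]
    have h2 : |2*(i n : ℝ) - n| ≤ 1 + Real.sqrt n * s := by
      rw [abs_le]; constructor <;> nlinarith [mul_nonneg hupos.le hs]
    nlinarith [abs_nonneg (2*(i n : ℝ) - n), mul_nonneg hupos.le hs]
  have hMlim : Tendsto (fun n : ℕ => (((n/2:ℕ):ℝ) + 1)/(n:ℝ)) atTop (𝓝 (1/2)) := by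
    apply tendsto_of_abs_le ?_ (const_div_nat_zero 2)
    filter_upwards [hbasic] with n hb
    obtain ⟨hu1, hu2, hsu, hMl, hMu⟩ := hb
    have hn0 : (0:ℝ) < n := by nlinarith
    have hid : (((n/2:ℕ):ℝ) + 1)/(n:ℝ) - 1/2 = (2*((n/2:ℕ):ℝ) + 2 - n)/(2*(n:ℝ)) := by
      field_simp
    rw [hid, abs_div, abs_of_pos (by linarith : (0:ℝ) < 2*(n:ℝ)),
      div_le_div_iff₀ (by linarith) hn0]
    have h2 : |2*((n/2:ℕ):ℝ) + 2 - n| ≤ 2 := by rw [abs_le]; constructor <;> linarith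
    nlinarith
  have hblim : Tendsto (fun n : ℕ => (2*(i n : ℝ) - 1 - n)/(((n/2:ℕ):ℝ) + 1)) atTop (𝓝 0) := by
    apply tendsto_of_abs_le ?_ (const_div_sqrt_zero (2*(2+s)))
    filter_upwards [hi, hbasic] with n h1 hb
    obtain ⟨hu1, hu2, hsu, hMl, hMu⟩ := hb
    have hupos : (0:ℝ) < Real.sqrt n := by linarith
    have hMp : (0:ℝ) < ((n/2:ℕ):ℝ) + 1 := by nlinarith
    have habs := abs_le.mp h1
    rw [sub_zero, abs_div, abs_of_pos hMp, div_le_div_iff₀ hMp hupos]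
    have h2 : |2*(i n : ℝ) - 1 - n| ≤ Real.sqrt n * (2 + s) := by
      rw [abs_le]; constructor <;> nlinarith [mul_nonneg hupos.le hs]
    nlinarith [abs_nonneg (2*(i n : ℝ) - 1 - n), mul_nonneg hupos.le hs]
  have hprod : Tendsto (fun n => (((i n : ℝ) - ((n/2:ℕ):ℝ))/Real.sqrt n) *
      (((i n : ℝ) + ((n/2:ℕ):ℝ) - n)/Real.sqrt n)) atTop (𝓝 (s^2/4)) := by
    have h := hAlim.mul hBlim
    have : s/2 * (s/2) = s^2/4 := by ring
    rwa [this] at h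
  -- upper exponent
  have hUarg : Tendsto (fun n => -(((i n : ℝ) - ((n/2:ℕ):ℝ)) * ((i n : ℝ) + ((n/2:ℕ):ℝ) - (n:ℝ)))/(i n : ℝ))
      atTop (𝓝 (-s^2/2)) := by
    have hdiv := (hprod.div hIlim (by norm_num : (1:ℝ)/2 ≠ 0)).neg
    have hval : -(s^2/4/(1/2)) = -s^2/2 := by ring
    rw [hval] at hdiv
    apply hdiv.congr'
    filter_upwards [hbasic] with n hb
    obtain ⟨hu1, hu2, hsu, hMl, hMu⟩ := hb
    have hupos : (0:ℝ) < Real.sqrt n := by linarith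
    have hn0 : (0:ℝ) < n := by nlinarith
    have hab : (((i n : ℝ) - ((n/2:ℕ):ℝ))/Real.sqrt n) * (((i n : ℝ) + ((n/2:ℕ):ℝ) - n)/Real.sqrt n)
        = (((i n : ℝ) - ((n/2:ℕ):ℝ)) * ((i n : ℝ) + ((n/2:ℕ):ℝ) - (n:ℝ)))/(n:ℝ) := by
      rw [div_mul_div_comm, Real.mul_self_sqrt hn0.le]
    simp only [Pi.neg_apply, Pi.div_apply]
    rw [hab, div_div_cancel_helper _ _ _ hn0.ne', neg_div]
  -- lower exponent
  have hone : Tendsto (fun n : ℕ => 1 + 2*((2*(i n : ℝ) - 1 - n)/(((n/2:ℕ):ℝ) + 1))) atTop (𝓝 1) := by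
    have h := (hblim.const_mul 2).const_add 1
    simpa using h
  have hLarg : Tendsto (fun n => -((1 + 2*((2*(i n : ℝ) - 1 - n)/(((n/2:ℕ):ℝ) + 1))) *
      (((i n : ℝ) - ((n/2:ℕ):ℝ)) * ((i n : ℝ) + ((n/2:ℕ):ℝ) - (n:ℝ))))/(((n/2:ℕ):ℝ) + 1))
      atTop (𝓝 (-s^2/2)) := by
    have hdiv := (((hone.mul hprod).div hMlim (by norm_num : (1:ℝ)/2 ≠ 0))).neg
    have hval : -(1*(s^2/4)/(1/2)) = -s^2/2 := by ring
    rw [hval] at hdiv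
    apply hdiv.congr'
    filter_upwards [hbasic] with n hb
    obtain ⟨hu1, hu2, hsu, hMl, hMu⟩ := hb
    have hn0 : (0:ℝ) < n := by nlinarith
    have hab : (((i n : ℝ) - ((n/2:ℕ):ℝ))/Real.sqrt n) * (((i n : ℝ) + ((n/2:ℕ):ℝ) - n)/Real.sqrt n)
        = (((i n : ℝ) - ((n/2:ℕ):ℝ)) * ((i n : ℝ) + ((n/2:ℕ):ℝ) - (n:ℝ)))/(n:ℝ) := by
      rw [div_mul_div_comm, Real.mul_self_sqrt hn0.le]
    simp only [Pi.neg_apply, Pi.div_apply]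
    rw [hab, ← mul_div_assoc, div_div_cancel_helper _ _ _ hn0.ne', neg_div]
  -- squeeze
  have hupper : ∀ᶠ n in atTop, (n.choose (i n) : ℝ)/cc n ≤
      Real.exp (-(((i n : ℝ) - ((n/2:ℕ):ℝ)) * ((i n : ℝ) + ((n/2:ℕ):ℝ) - (n:ℝ)))/(i n : ℝ)) := by
    filter_upwards [hnat] with n hn
    have h := choose_upper n (i n) hn.1 hn.2 _ rfl (prod_formula n (i n) hn.1 hn.2)
      (sum_formula n (i n) hn.1)
    have hcc : (n.choose (n/2) : ℝ) = cc n := rfl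
    rw [div_le_iff₀ (cc_pos n), ← hcc]
    exact h.trans_eq (mul_comm _ _)
  have hb_half : ∀ᶠ n in atTop, (2*(i n : ℝ) - 1 - n)/(((n/2:ℕ):ℝ) + 1) ≤ 1/2 :=
    hblim.eventually_le_const (by norm_num)
  have hlower : ∀ᶠ n in atTop, Real.exp (-((1 + 2*((2*(i n : ℝ) - 1 - n)/(((n/2:ℕ):ℝ) + 1))) *
      (((i n : ℝ) - ((n/2:ℕ):ℝ)) * ((i n : ℝ) + ((n/2:ℕ):ℝ) - (n:ℝ))))/(((n/2:ℕ):ℝ) + 1))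
      ≤ (n.choose (i n) : ℝ)/cc n := by
    filter_upwards [hnat, hb_half] with n hn hbh
    have h := choose_lower n (i n) hn.1 hn.2 _ rfl hbh _ rfl
      (prod_formula n (i n) hn.1 hn.2) (sum_formula n (i n) hn.1)
    have hcc : (n.choose (n/2) : ℝ) = cc n := rfl
    rw [le_div_iff₀ (cc_pos n)]
    calc Real.exp _ * cc n = cc n * Real.exp _ := mul_comm _ _
      _ ≤ _ := by rw [← hcc]; exact h
  exact tendsto_of_tendsto_of_tendsto_of_le_of_le' hLarg.rexp hUarg.rexp hlower hupper

lemma phi_tendsto (t : ℝ) : Tendsto (fun n => phi n t) atTop (𝓝 (Real.exp (-t^2/2))) := by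
  have hn1 : ∀ᶠ n : ℕ in atTop, 1 ≤ n := eventually_ge_atTop 1
  have hbig : ∀ᶠ n : ℕ in atTop, ((|t|+2)^2 : ℝ) ≤ n :=
    tendsto_natCast_atTop_atTop.eventually_ge_atTop _
  have hbasic : ∀ᶠ n : ℕ in atTop, (1:ℝ) ≤ Real.sqrt n ∧ |t| + 2 ≤ Real.sqrt n := by
    filter_upwards [hn1, hbig] with n h1 h2
    constructor
    · rw [show (1:ℝ) = Real.sqrt 1 from Real.sqrt_one.symm]
      exact Real.sqrt_le_sqrt (by exact_mod_cast h1)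
    · calc |t| + 2 = Real.sqrt ((|t|+2)^2) := (Real.sqrt_sq (by positivity)).symm
        _ ≤ Real.sqrt n := Real.sqrt_le_sqrt h2
  rcases le_or_gt 0 t with ht | ht
  · -- nonnegative t
    have hIpos : ∀ n : ℕ, 0 ≤ II n t := by
      intro n
      apply Int.floor_nonneg.mpr
      have : 0 ≤ Real.sqrt n * t := mul_nonneg (Real.sqrt_nonneg _) ht
      positivity
    have hi : ∀ n : ℕ, |2*(((II n t).toNat : ℕ) : ℝ) - n - Real.sqrt n * t| ≤ 1 := by
      intro n
      have hfl1 : ((II n t : ℤ):ℝ) ≤ ((n:ℝ) + Real.sqrt n * t + 1)/2 := Int.floor_le _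
      have hfl2 : ((n:ℝ) + Real.sqrt n * t + 1)/2 - 1 < ((II n t : ℤ):ℝ) := Int.sub_one_lt_floor _
      have hcast : (((II n t).toNat : ℕ) : ℝ) = ((II n t : ℤ):ℝ) := by
        exact_mod_cast congrArg (fun z : ℤ => (z:ℝ)) (Int.toNat_of_nonneg (hIpos n))
      rw [hcast, abs_le]
      constructor <;> linarith
    have hmain := pointwise_pos t ht (fun n => (II n t).toNat) (Eventually.of_forall hi)
    apply hmain.congr
    intro n
    rw [phi, if_pos (hIpos n)]
  · -- negative t
    have habs : |t| = -t := abs_of_neg ht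
    have hev : ∀ᶠ n : ℕ in atTop, 0 ≤ II n t ∧ (II n t).toNat ≤ n := by
      filter_upwards [hn1, hbasic] with n h1 hb
      obtain ⟨hu1, hut⟩ := hb
      have hupos : (0:ℝ) < Real.sqrt n := by linarith
      have hn2 : (Real.sqrt n)^2 = n := Real.sq_sqrt (by positivity)
      have hst : Real.sqrt n * t = -(Real.sqrt n * |t|) := by rw [habs]; ring
      have hI0 : 0 ≤ II n t := by
        apply Int.floor_nonneg.mpr
        have : Real.sqrt n * |t| ≤ (n:ℝ) := by nlinarith [abs_nonneg t]
        rw [div_nonneg_iff]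
        left
        constructor <;> nlinarith
      refine ⟨hI0, ?_⟩
      have hfl1 : ((II n t : ℤ):ℝ) ≤ ((n:ℝ) + Real.sqrt n * t + 1)/2 := Int.floor_le _
      have hcast : (((II n t).toNat : ℕ) : ℝ) = ((II n t : ℤ):ℝ) := by
        exact_mod_cast congrArg (fun z : ℤ => (z:ℝ)) (Int.toNat_of_nonneg hI0)
      have hy : ((n:ℝ) + Real.sqrt n * t + 1)/2 ≤ ((n:ℝ) + 1)/2 := by
        have : Real.sqrt n * t ≤ 0 := mul_nonpos_of_nonneg_of_nonpos hupos.le ht.le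
        linarith
      have hvr : (((II n t).toNat : ℕ) : ℝ) ≤ ((n:ℝ)+1)/2 := by
        rw [hcast]; linarith
      have hn1r : (1:ℝ) ≤ n := by exact_mod_cast h1
      have : (((II n t).toNat : ℕ) : ℝ) ≤ n := by linarith
      exact_mod_cast this
    have hi : ∀ᶠ n : ℕ in atTop, |2*(((n - (II n t).toNat : ℕ)) : ℝ) - n - Real.sqrt n * (-t)| ≤ 1 := by
      filter_upwards [hev] with n hn
      obtain ⟨hI0, hvn⟩ := hn
      have hfl1 : ((II n t : ℤ):ℝ) ≤ ((n:ℝ) + Real.sqrt n * t + 1)/2 := Int.floor_le _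
      have hfl2 : ((n:ℝ) + Real.sqrt n * t + 1)/2 - 1 < ((II n t : ℤ):ℝ) := Int.sub_one_lt_floor _
      have hcast : (((II n t).toNat : ℕ) : ℝ) = ((II n t : ℤ):ℝ) := by
        exact_mod_cast congrArg (fun z : ℤ => (z:ℝ)) (Int.toNat_of_nonneg hI0)
      have hwr : (((n - (II n t).toNat : ℕ)) : ℝ) = (n:ℝ) - ((II n t).toNat : ℕ) :=
        Nat.cast_sub hvn
      rw [hwr, hcast, abs_le]
      constructor <;> linarith
    have hmain := pointwise_pos (-t) (by linarith) (fun n => n - (II n t).toNat) hi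
    have hsq : (-t)^2 = t^2 := by ring
    rw [hsq] at hmain
    apply hmain.congr'
    filter_upwards [hev] with n hn
    obtain ⟨hI0, hvn⟩ := hn
    have hsym : (n.choose (n - (II n t).toNat) : ℝ) = (n.choose ((II n t).toNat) : ℝ) := by
      exact_mod_cast congrArg (fun k : ℕ => (k:ℝ)) (Nat.choose_symm hvn)
    rw [hsym, phi, if_pos hI0]

lemma phi_eq_chi (n : ℕ) : phi n = chi n n := by
  funext t
  rw [chi]
  split
  · rfl
  · rename_i h
    rw [phi]
    split
    · rename_i h0
      have : n < (II n t).toNat := by omega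
      rw [Nat.choose_eq_zero_of_lt this]
      simp
    · rfl

lemma II_le_iff (n K : ℕ) (hn : 1 ≤ n) (t : ℝ) :
    II n t ≤ (K:ℤ) ↔ t < (2*(K:ℝ) + 1 - n)/Real.sqrt n := by
  have hs : (0:ℝ) < Real.sqrt n := Real.sqrt_pos.mpr (by exact_mod_cast hn)
  rw [II, Int.floor_le_iff, lt_div_iff₀ hs]
  push_cast
  constructor <;> intro h <;> nlinarith [h]

lemma main_limit (q R : ℝ)
    (hIio : ∫ τ in Set.Iio q, Real.exp (-τ^2/2) = R * Real.sqrt (2*Real.pi))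
    (k : ℕ → ℕ)
    (hk : Tendsto (fun n : ℕ => (2*(k n : ℝ) + 1 - n)/Real.sqrt n) atTop (𝓝 q)) :
    Tendsto (fun n => (∑ i ∈ Finset.range (k n + 1), (n.choose i : ℝ))/2^n) atTop (𝓝 R) := by
  have hn1 : ∀ᶠ n : ℕ in atTop, 1 ≤ n := eventually_ge_atTop 1
  have h2pi : (0:ℝ) < Real.sqrt (2*Real.pi) := Real.sqrt_pos.mpr (by positivity)
  -- total gaussian integral
  have htotal : ∫ τ : ℝ, Real.exp (-τ^2/2) = Real.sqrt (2*Real.pi) := by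
    have h := integral_gaussian (1/2 : ℝ)
    have heq : (fun x : ℝ => Real.exp (-(1/2 : ℝ) * x^2)) = fun x : ℝ => Real.exp (-x^2/2) := by
      funext x; congr 1; ring
    rw [heq] at h
    rw [h]
    congr 1
    ring
  -- denominator tendsto
  have hden : Tendsto (fun n : ℕ => ∫ t, phi n t) atTop (𝓝 (Real.sqrt (2*Real.pi))) := by
    rw [← htotal]
    apply MeasureTheory.tendsto_integral_filter_of_dominated_convergence
      (fun t : ℝ => Real.exp (9/4 - t^2/16))
    · filter_upwards [hn1] with n hn
      have := (chi_integrable n n hn)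
      rw [← phi_eq_chi n] at this
      exact this.aestronglyMeasurable
    · filter_upwards [hn1] with n hn
      apply MeasureTheory.ae_of_all
      intro t
      rw [Real.norm_eq_abs, abs_of_nonneg (phi_nonneg n t)]
      exact phi_le_bound n hn t
    · exact bound_integrable
    · exact MeasureTheory.ae_of_all _ (fun t => phi_tendsto t)
  -- numerator tendsto
  have hae : ∀ᵐ t : ℝ, t ≠ q := by
    rw [MeasureTheory.ae_iff]
    have hset : {a : ℝ | ¬ a ≠ q} = {q} := by ext a; simp
    rw [hset]
    exact measure_singleton q
  have hnum : Tendsto (fun n : ℕ => ∫ t, chi n (k n) t) atTop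
      (𝓝 (∫ t, Set.indicator (Set.Iio q) (fun τ => Real.exp (-τ^2/2)) t)) := by
    apply MeasureTheory.tendsto_integral_filter_of_dominated_convergence
      (fun t : ℝ => Real.exp (9/4 - t^2/16))
    · filter_upwards [hn1] with n hn
      exact (chi_integrable n (k n) hn).aestronglyMeasurable
    · filter_upwards [hn1] with n hn
      apply MeasureTheory.ae_of_all
      intro t
      have h1 : |chi n (k n) t| ≤ phi n t := by
        rw [chi]
        split
        · rw [abs_of_nonneg (phi_nonneg n t)]
        · rw [abs_zero]; exact phi_nonneg n t
      rw [Real.norm_eq_abs]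
      exact h1.trans (phi_le_bound n hn t)
    · exact bound_integrable
    · filter_upwards [hae] with t ht
      rcases lt_or_gt_of_ne ht with hlt | hgt
      · -- t < q : chi eventually equals phi
        rw [Set.indicator_of_mem (Set.mem_Iio.mpr hlt)]
        apply (phi_tendsto t).congr'
        filter_upwards [hn1, hk.eventually_const_lt hlt] with n hn hthr
        rw [chi, if_pos]
        rw [II_le_iff n (k n) hn t]
        exact hthr
      · -- t > q : chi eventually 0
        rw [Set.indicator_of_notMem (by simp [Set.mem_Iio]; linarith : t ∉ Set.Iio q)]
        apply tendsto_const_nhds.congr'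
        filter_upwards [hn1, hk.eventually_lt_const hgt] with n hn hthr
        rw [chi, if_neg]
        rw [II_le_iff n (k n) hn t]
        linarith
  -- identify limit of numerator
  have hind : ∫ t, Set.indicator (Set.Iio q) (fun τ => Real.exp (-τ^2/2)) t
      = R * Real.sqrt (2*Real.pi) := by
    rw [MeasureTheory.integral_indicator measurableSet_Iio]
    exact hIio
  rw [hind] at hnum
  -- express the target as ratio of integrals
  have hratio : Tendsto (fun n : ℕ => (∫ t, chi n (k n) t) / (∫ t, phi n t)) atTop
      (𝓝 (R * Real.sqrt (2*Real.pi) / Real.sqrt (2*Real.pi))) :=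
    hnum.div hden h2pi.ne'
  have hval : R * Real.sqrt (2*Real.pi) / Real.sqrt (2*Real.pi) = R := by
    field_simp
  rw [hval] at hratio
  apply hratio.congr'
  filter_upwards [hn1] with n hn
  have hs : (0:ℝ) < Real.sqrt n := Real.sqrt_pos.mpr (by exact_mod_cast hn)
  have hccp := cc_pos n
  have hu : ∫ t, chi n (k n) t = (2 / Real.sqrt n) * ((∑ i ∈ Finset.range (k n + 1), (n.choose i : ℝ)) / cc n) :=
    chi_integral n (k n) hn
  have hv : ∫ t, phi n t = (2 / Real.sqrt n) * ((2:ℝ)^n / cc n) := by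
    rw [phi_eq_chi n, chi_integral n n hn]
    have hc : (∑ i ∈ Finset.range (n + 1), (n.choose i : ℝ)) = 2^n := by
      exact_mod_cast Nat.sum_range_choose n
    rw [hc]
  rw [hu, hv]
  have hpos1 : (0:ℝ) < 2 / Real.sqrt n * ((2:ℝ)^n / cc n) :=
    mul_pos (by positivity) (div_pos (by positivity) hccp)
  rw [div_eq_div_iff hpos1.ne' (by positivity : ((2:ℝ)^n) ≠ 0)]
  ring

end Stmt16

open Filter Stmt16 MeasureTheory
open scoped Topology

/-- For R ∈ (0,1), with the canonical radius sequence
r_m = max(⌊m/2 + (√m/2)q⌋, 0) where Q(q) = 1−R, for every fixed integer j ≥ 0 one has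
lim_{m→∞} C(m−j, ≤ r_m)/2^{m−j} = R. -/
theorem stmt16 (R : ℝ) (hR : R ∈ Set.Ioo (0 : ℝ) 1)
    (q : ℝ)
    (hq : (1 / Real.sqrt (2 * Real.pi)) * ∫ τ in Set.Ioi q, Real.exp (-τ ^ 2 / 2) = 1 - R)
    (r : ℕ → ℕ)
    (hr : ∀ m : ℕ, r m = Int.toNat ⌊(m : ℝ) / 2 + Real.sqrt m / 2 * q⌋)
    (j : ℕ) :
    Filter.Tendsto
      (fun m : ℕ => (∑ i ∈ Finset.range (r m + 1), ((m - j).choose i : ℝ)) / 2 ^ (m - j))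
      Filter.atTop (nhds R) := by
  have h2pi : (0:ℝ) < Real.sqrt (2*Real.pi) := Real.sqrt_pos.mpr (by positivity)
  have hInt : Integrable (fun τ : ℝ => Real.exp (-τ^2/2)) := by
    have h := integrable_exp_neg_mul_sq (by norm_num : (0:ℝ) < 1/2)
    have heq : (fun x : ℝ => Real.exp (-(1/2:ℝ) * x^2)) = fun x : ℝ => Real.exp (-x^2/2) := by
      funext x; congr 1; ring
    rwa [heq] at h
  have htotal : ∫ τ : ℝ, Real.exp (-τ^2/2) = Real.sqrt (2*Real.pi) := by
    have h := integral_gaussian (1/2 : ℝ)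
    have heq : (fun x : ℝ => Real.exp (-(1/2 : ℝ) * x^2)) = fun x : ℝ => Real.exp (-x^2/2) := by
      funext x; congr 1; ring
    rw [heq] at h
    rw [h]
    congr 1
    ring
  have hIoi : ∫ τ in Set.Ioi q, Real.exp (-τ^2/2) = (1-R) * Real.sqrt (2*Real.pi) := by
    have h := hq
    field_simp [h2pi.ne'] at h
    rw [Real.sqrt_mul (by norm_num : (0:ℝ) ≤ 2)] at h ⊢
    simp only [neg_div] at h ⊢; linear_combination h
  have hIic : ∫ τ in Set.Iic q, Real.exp (-τ^2/2) = R * Real.sqrt (2*Real.pi) := by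
    have hsplit := intervalIntegral.integral_Iic_add_Ioi (b := q)
      (hInt.integrableOn) (hInt.integrableOn)
    have h1 : ∫ τ in Set.Iic q, Real.exp (-τ^2/2)
        = (∫ τ : ℝ, Real.exp (-τ^2/2)) - ∫ τ in Set.Ioi q, Real.exp (-τ^2/2) :=
      eq_sub_of_add_eq hsplit
    rw [h1, htotal, hIoi]
    ring
  have hIio2 : ∫ τ in Set.Iio q, Real.exp (-τ^2/2) = R * Real.sqrt (2*Real.pi) := by
    rw [← MeasureTheory.integral_Iic_eq_integral_Iio]
    exact hIic
  -- the shifted radius sequence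
  have hk : Tendsto (fun n : ℕ => (2*((r (n + j) : ℕ) : ℝ) + 1 - n)/Real.sqrt n) atTop (𝓝 q) := by
    apply tendsto_of_abs_le ?_ (const_div_sqrt_zero ((j:ℝ) + 1 + j*|q|))
    have hbig : ∀ᶠ n : ℕ in atTop, ((|q|+2)^2 : ℝ) ≤ n :=
      tendsto_natCast_atTop_atTop.eventually_ge_atTop _
    filter_upwards [eventually_ge_atTop 1, hbig] with n h1 h2
    have hn0 : (0:ℝ) < n := by exact_mod_cast h1
    have hsn : (0:ℝ) < Real.sqrt n := Real.sqrt_pos.mpr hn0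
    have hsn1 : (1:ℝ) ≤ Real.sqrt n := by
      rw [show (1:ℝ) = Real.sqrt 1 from Real.sqrt_one.symm]
      exact Real.sqrt_le_sqrt (by exact_mod_cast h1)
    have hsnq : |q| + 2 ≤ Real.sqrt n := by
      calc |q| + 2 = Real.sqrt ((|q|+2)^2) := (Real.sqrt_sq (by positivity)).symm
        _ ≤ Real.sqrt n := Real.sqrt_le_sqrt h2
    have hmn : ((n:ℝ)) ≤ ((n + j : ℕ) : ℝ) := by push_cast; linarith [Nat.cast_nonneg (α := ℝ) j]
    have hsm : Real.sqrt n ≤ Real.sqrt ((n + j : ℕ) : ℝ) := Real.sqrt_le_sqrt hmn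
    have hm2 : (Real.sqrt ((n + j : ℕ) : ℝ))^2 = ((n + j : ℕ) : ℝ) := Real.sq_sqrt (by positivity)
    have hn2 : (Real.sqrt (n:ℝ))^2 = (n:ℝ) := Real.sq_sqrt hn0.le
    have hdiff : Real.sqrt ((n + j : ℕ) : ℝ) - Real.sqrt n ≤ (j:ℝ) := by
      have hprod : (Real.sqrt ((n + j : ℕ) : ℝ) - Real.sqrt n)
          * (Real.sqrt ((n + j : ℕ) : ℝ) + Real.sqrt n) = (j:ℝ) := by
        have : ((n + j : ℕ) : ℝ) - (n:ℝ) = (j:ℝ) := by push_cast; ring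
        nlinarith [hm2, hn2]
      nlinarith [mul_nonneg (sub_nonneg.mpr hsm) (by linarith : (0:ℝ) ≤ Real.sqrt ((n + j : ℕ) : ℝ) + Real.sqrt n - 1)]
    have hdiff0 : (0:ℝ) ≤ Real.sqrt ((n + j : ℕ) : ℝ) - Real.sqrt n := sub_nonneg.mpr hsm
    -- the floor argument
    set m : ℕ := n + j with hm
    set ar : ℝ := ((m:ℕ) : ℝ)/2 + Real.sqrt ((m:ℕ):ℝ)/2 * q with har
    have hqsm : |q| ≤ Real.sqrt ((m:ℕ):ℝ) := by
      calc |q| ≤ |q| + 2 := by linarith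
        _ ≤ Real.sqrt n := hsnq
        _ ≤ _ := hsm
    have harpos : 0 ≤ ar := by
      rw [har]
      have h3 : -(Real.sqrt ((m:ℕ):ℝ)) * |q| ≤ Real.sqrt ((m:ℕ):ℝ) * q := by
        nlinarith [neg_abs_le q, abs_nonneg q, Real.sqrt_nonneg ((m:ℕ):ℝ)]
      nlinarith [hm2]
    have hfl0 : 0 ≤ ⌊ar⌋ := Int.floor_nonneg.mpr harpos
    have hcast : ((r m : ℕ) : ℝ) = ((⌊ar⌋ : ℤ) : ℝ) := by
      rw [hr m]
      exact_mod_cast congrArg (fun z : ℤ => (z:ℝ)) (Int.toNat_of_nonneg hfl0)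
    have hfl1 : ((⌊ar⌋ : ℤ) : ℝ) ≤ ar := Int.floor_le _
    have hfl2 : ar - 1 < ((⌊ar⌋ : ℤ) : ℝ) := Int.sub_one_lt_floor _
    have hmr : ((m:ℕ):ℝ) = (n:ℝ) + j := by rw [hm]; push_cast; ring
    have hid : (2*((r m : ℕ) : ℝ) + 1 - n)/Real.sqrt n - q
        = (2*((r m : ℕ) : ℝ) + 1 - n - Real.sqrt n * q)/Real.sqrt n := by
      field_simp
    rw [hid, abs_div, abs_of_pos hsn, div_le_div_iff₀ hsn hsn]
    have hnum : |2*((r m : ℕ) : ℝ) + 1 - n - Real.sqrt n * q| ≤ (j:ℝ) + 1 + j*|q| := by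
      rw [hcast, abs_le]
      have e1 : 2*ar = (n:ℝ) + j + Real.sqrt ((m:ℕ):ℝ) * q := by rw [har, hmr]; ring
      have e2 : |(Real.sqrt ((m:ℕ):ℝ) - Real.sqrt n) * q| ≤ (j:ℝ)*|q| := by
        rw [abs_mul, abs_of_nonneg hdiff0]
        exact mul_le_mul_of_nonneg_right hdiff (abs_nonneg q)
      have e3 := abs_le.mp (le_refl |(Real.sqrt ((m:ℕ):ℝ) - Real.sqrt n) * q|)
      have e4 := (abs_le.mp e2)
      have e5 : -((j:ℝ)*|q|) ≤ (Real.sqrt ((m:ℕ):ℝ) - Real.sqrt n) * q ∧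
          (Real.sqrt ((m:ℕ):ℝ) - Real.sqrt n) * q ≤ (j:ℝ)*|q| := abs_le.mp e2
      constructor <;> nlinarith [e5.1, e5.2, hfl1, hfl2]
    nlinarith [hnum, abs_nonneg (2*((r m : ℕ) : ℝ) + 1 - n - Real.sqrt n * q), hsn1]
  have hG := Stmt16.main_limit q R hIio2 (fun n => r (n + j)) hk
  have hcomp := hG.comp (tendsto_sub_atTop_nat j)
  apply hcomp.congr'
  filter_upwards [eventually_ge_atTop j] with m hm
  have hmj : (m - j) + j = m := Nat.sub_add_cancel hm
  simp only [Function.comp]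
  rw [hmj]
end

section
/- Let m ≥ 1, 0 ≤ r ≤ m, and 0 ≤ u ≤ m be integers. Let g be a codeword of RM(m,r) whose Hamming weight w satisfies w ≥ 2^{m−u}. Then the number of codewords h ∈ RM(m,r) such that supp(g) ⊆ supp(h) (i.e., h(z) = 1 for every evaluation point z with g(z) = 1) is at most 2^{C(m,≤r) − C(m−u,≤r)}, where C(a, ≤ b) := Σ_{i=0}^{b} C(a, i) and C(a,i) is the binomial coefficient. -/
/-- The `m`-bit binary representation (MSB first) of the coordinate index `s`,
as an evaluation point in `F₂^m` (lexicographic coordinate ordering). -/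
def bitRepr (m : ℕ) (s : ℕ) : Fin m → ZMod 2 :=
  fun j => if Nat.testBit s (m - 1 - (j : ℕ)) then 1 else 0

/-- Evaluation of an `m`-variate polynomial over `F₂` at all points of `F₂^m`,
listed in lexicographic order, as a linear map. -/
noncomputable def evalRM (m : ℕ) :
    MvPolynomial (Fin m) (ZMod 2) →ₗ[ZMod 2] (Fin (2 ^ m) → ZMod 2) :=
  LinearMap.pi fun s => (MvPolynomial.aeval (bitRepr m (s : ℕ))).toLinearMap

/-- The Reed-Muller code RM(m,r): evaluation vectors of polynomials of total degree ≤ r. -/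
noncomputable def RM (m r : ℕ) : Submodule (ZMod 2) (Fin (2 ^ m) → ZMod 2) :=
  (MvPolynomial.restrictTotalDegree (Fin m) (ZMod 2) r).map (evalRM m)

/-- A word `w` satisfies the `(d,∞)`-RLL constraint: any two 1s are separated by at least d 0s. -/
def RLL (d : ℕ) {n : ℕ} (w : Fin n → ZMod 2) : Prop :=
  ∀ i j : Fin n, w i = 1 → (i : ℕ) < (j : ℕ) → (j : ℕ) ≤ (i : ℕ) + d → w j = 0


/-- binary popcount -/
def pc : ℕ → ℕ
  | 0 => 0
  | (n+1) => (n+1) % 2 + pc ((n+1) / 2)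
decreasing_by exact Nat.div_lt_self (Nat.succ_pos n) one_lt_two

lemma pc_zero : pc 0 = 0 := by simp [pc]

lemma pc_eq (n : ℕ) (h : n ≠ 0) : pc n = n % 2 + pc (n / 2) := by
  cases n with
  | zero => exact absurd rfl h
  | succ k => simp [pc]

lemma pc_eq_zero {n : ℕ} : pc n = 0 ↔ n = 0 := by
  constructor
  · intro h
    induction n using Nat.strong_induction_on with
    | _ n ih =>
      by_contra hn
      rw [pc_eq n hn] at h
      have h1 : n % 2 = 0 := by omega
      have h2 : pc (n / 2) = 0 := by omega
      have := ih (n / 2) (Nat.div_lt_self (Nat.pos_of_ne_zero hn) one_lt_two) h2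
      omega
  · rintro rfl; exact pc_zero

/-- counting function: number of i < t with pc i ≤ q -/
def f (q t : ℕ) : ℕ := ((Finset.range t).filter (fun i => pc i ≤ q)).card

lemma f_zero (q : ℕ) : f q 0 = 0 := rfl

lemma f_succ (q t : ℕ) : f q (t+1) = f q t + (if pc t ≤ q then 1 else 0) := by
  unfold f
  rw [Finset.range_add_one, Finset.filter_insert]
  split
  · rw [Finset.card_insert_of_notMem (by simp)]
  · simp

lemma f_one (q : ℕ) : f q 1 = 1 := by
  rw [show (1:ℕ) = 0 + 1 from rfl, f_succ, f_zero]
  simp [pc_zero]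

lemma f_mono_t (q : ℕ) {t t' : ℕ} (h : t ≤ t') : f q t ≤ f q t' := by
  apply Finset.card_le_card
  apply Finset.filter_subset_filter
  exact Finset.range_subset_range.mpr h

lemma f_mono_q {q q' : ℕ} (t : ℕ) (h : q ≤ q') : f q t ≤ f q' t := by
  apply Finset.card_le_card
  intro x hx
  simp only [Finset.mem_filter] at *
  exact ⟨hx.1, le_trans hx.2 h⟩

lemma f_pos (q : ℕ) {t : ℕ} (h : 1 ≤ t) : 1 ≤ f q t := by
  calc 1 = f q 1 := (f_one q).symm
  _ ≤ f q t := f_mono_t q h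

lemma f_zero_le_one (t : ℕ) : f 0 t ≤ 1 := by
  unfold f
  calc ((Finset.range t).filter (fun i => pc i ≤ 0)).card
      ≤ ({0} : Finset ℕ).card := by
        apply Finset.card_le_card
        intro x hx
        simp only [Finset.mem_filter, Finset.mem_range, Nat.le_zero] at hx
        simp [pc_eq_zero.mp hx.2]
    _ = 1 := rfl

lemma pc_two_mul (j : ℕ) : pc (2 * j) = pc j := by
  rcases Nat.eq_zero_or_pos j with rfl | h
  · simp [pc_zero]
  · rw [pc_eq (2*j) (by omega)]
    simp [Nat.mul_div_cancel_left, Nat.mul_mod_right]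

lemma pc_two_mul_add_one (j : ℕ) : pc (2 * j + 1) = pc j + 1 := by
  rw [pc_eq (2*j+1) (by omega)]
  have h1 : (2*j+1) % 2 = 1 := by omega
  have h2 : (2*j+1) / 2 = j := by omega
  rw [h1, h2]; omega

lemma f_rec (q t : ℕ) : f (q+1) t = f (q+1) ((t+1)/2) + f q (t/2) := by
  induction t with
  | zero => rfl
  | succ t ih =>
    rcases Nat.even_or_odd t with ⟨j, hj⟩ | ⟨j, hj⟩
    · -- t = j + j
      have e5 : (t+1+1)/2 = j+1 := by omega
      have e6 : (t+1)/2 = j := by omega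
      have e7 : t/2 = j := by omega
      rw [f_succ, ih, e5, e6, e7, f_succ (q+1) j]
      have hpc : pc t = pc j := by
        rw [show t = 2*j by omega]; exact pc_two_mul j
      rw [hpc]
      omega
    · -- t = 2j + 1
      have e5 : (t+1+1)/2 = j+1 := by omega
      have e6 : (t+1)/2 = j+1 := by omega
      have e7 : t/2 = j := by omega
      rw [f_succ, ih, e5, e6, e7, f_succ q j]
      have hpc : pc t = pc j + 1 := by
        rw [show t = 2*j+1 by omega]; exact pc_two_mul_add_one j
      rw [hpc]
      have : (if pc j + 1 ≤ q + 1 then (1:ℕ) else 0) = (if pc j ≤ q then 1 else 0) := by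
        split <;> split <;> omega
      rw [this]
      omega

/-- Claim A : subadditivity with degree drop -/
lemma claimA : ∀ n r a b : ℕ, a + b ≤ n → b ≤ a → f (r+1) (a+b) ≤ f (r+1) a + f r b := by
  intro n
  induction n using Nat.strong_induction_on with
  | _ n ih =>
    intro r a b hn hba
    rcases Nat.eq_zero_or_pos b with rfl | hb
    · simp [f_zero]
    rcases eq_or_lt_of_le hba with rfl | hlt
    · -- a = b : equality via f_rec
      have h := f_rec r (2*b)
      have e1 : (2*b+1)/2 = b := by omega
      have e2 : (2*b)/2 = b := by omega
      rw [e1, e2] at h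
      rw [show b + b = 2*b by omega, h]
    · -- b < a, b ≥ 1, so a ≥ 2
      have ha2 : 2 ≤ a := by omega
      -- choose u v depending on parity of a
      obtain ⟨u, v, huv1, huv2, hua, hva, hcase⟩ :
          ∃ u v : ℕ, (a+b+1)/2 ≤ (a+1)/2 + u ∧ (a+b)/2 ≤ a/2 + v ∧ u ≤ (a+1)/2 ∧ v ≤ a/2 ∧
            ((u = (b+1)/2 ∧ v = b/2) ∨ (u = b/2 ∧ v = (b+1)/2)) := by
        by_cases hpar : a % 2 = 0
        · exact ⟨(b+1)/2, b/2, by omega, by omega, by omega, by omega, Or.inl ⟨rfl, rfl⟩⟩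
        · exact ⟨b/2, (b+1)/2, by omega, by omega, by omega, by omega, Or.inr ⟨rfl, rfl⟩⟩
      have hsz1 : (a+1)/2 + u < n := by omega
      have hsz2 : a/2 + v < n := by omega
      have step1 : f (r+1) (a+b) ≤ f (r+1) ((a+1)/2 + u) + f r (a/2 + v) := by
        rw [f_rec r (a+b)]
        exact Nat.add_le_add (f_mono_t _ huv1) (f_mono_t _ huv2)
      have recA : f (r+1) a = f (r+1) ((a+1)/2) + f r (a/2) := f_rec r a
      have step2 : f (r+1) ((a+1)/2 + u) ≤ f (r+1) ((a+1)/2) + f r u :=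
        ih ((a+1)/2 + u) hsz1 r ((a+1)/2) u le_rfl hua
      cases r with
      | zero =>
        have h0b : f 0 b = 1 := le_antisymm (f_zero_le_one b) (f_pos 0 hb)
        have h0a'' : f 0 (a/2) = 1 := le_antisymm (f_zero_le_one _) (f_pos 0 (by omega))
        have step3 : f 0 (a/2 + v) ≤ 1 := f_zero_le_one _
        have h0u : f 0 u ≤ 1 := f_zero_le_one u
        omega
      | succ r' =>
        have step3 : f (r'+1) (a/2 + v) ≤ f (r'+1) (a/2) + f r' v :=
          ih (a/2 + v) hsz2 r' (a/2) v le_rfl hva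
        have recB : f (r'+1) b = f (r'+1) ((b+1)/2) + f r' (b/2) := f_rec r' b
        have key : f (r'+1) u + f r' v ≤ f (r'+1) ((b+1)/2) + f r' (b/2) := by
          rcases hcase with ⟨hu, hv⟩ | ⟨hu, hv⟩
          · rw [hu, hv]
          · rcases Nat.even_or_odd b with ⟨d, hd⟩ | ⟨d, hd⟩
            · have : (b+1)/2 = b/2 := by omega
              rw [hu, hv, this]
            · have e1 : (b+1)/2 = b/2 + 1 := by omega
              have i1 := f_succ (r'+1) (b/2)
              have i2 := f_succ r' (b/2)
              have i3 : (if pc (b/2) ≤ r' then (1:ℕ) else 0) ≤ (if pc (b/2) ≤ r'+1 then 1 else 0) := by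
                split <;> split <;> omega
              rw [hu, hv, e1]
              omega
        omega

lemma sum_choose_succ (s r : ℕ) :
    ∑ i ∈ Finset.range (r+1), (s+1).choose i
      = ∑ i ∈ Finset.range (r+1), s.choose i + ∑ i ∈ Finset.range r, s.choose i := by
  induction r with
  | zero => simp
  | succ r ih =>
    rw [Finset.sum_range_succ, ih, Finset.sum_range_succ (fun i => s.choose i) (r+1),
      Finset.sum_range_succ (fun i => s.choose i) r, Nat.choose_succ_succ]
    simp only [Nat.succ_eq_add_one]
    omega

/-- f at powers of two dominates partial binomial sums -/
lemma f_pow_two (r s : ℕ) : ∑ i ∈ Finset.range (r+1), s.choose i ≤ f r (2^s) := by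
  induction s generalizing r with
  | zero =>
    have h1 : ∑ i ∈ Finset.range (r+1), Nat.choose 0 i ≤ 1 := by
      induction r with
      | zero => simp
      | succ r ihr => rw [Finset.sum_range_succ]; simpa using ihr
    calc ∑ i ∈ Finset.range (r+1), Nat.choose 0 i ≤ 1 := h1
      _ ≤ f r (2^0) := f_pos r (by norm_num)
  | succ s ihs =>
    cases r with
    | zero =>
      simpa using f_pos 0 (Nat.pow_pos (show 0 < 2 by norm_num) : (0:ℕ) < 2^(s+1))
    | succ r =>
      have hrec : f (r+1) (2^(s+1)) = f (r+1) (2^s) + f r (2^s) := by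
        have h := f_rec r (2^(s+1))
        have hp : 2^(s+1) = 2 * 2^s := by ring
        have e1 : (2^(s+1)+1)/2 = 2^s := by omega
        have e2 : (2^(s+1))/2 = 2^s := by omega
        rw [e1, e2] at h; exact h
      rw [hrec, sum_choose_succ]
      exact Nat.add_le_add (ihs (r+1)) (ihs r)


open Module

variable {K : Type*} [Field K]

lemma rankNullity {V W : Type*} [AddCommGroup V] [Module K V] [AddCommGroup W] [Module K W]
    [FiniteDimensional K V] (p : Submodule K V) (g : V →ₗ[K] W) :
    finrank K (p.map g) + finrank K (p ⊓ LinearMap.ker g : Submodule K V) = finrank K p := by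
  have h := LinearMap.finrank_range_add_finrank_ker (g.domRestrict p)
  rw [LinearMap.range_domRestrict, LinearMap.ker_domRestrict] at h
  have hcomap : Submodule.comap p.subtype (LinearMap.ker g)
      = Submodule.comap p.subtype (p ⊓ LinearMap.ker g) := by
    ext ⟨v, hv⟩
    simp [hv]
  have he : finrank K (Submodule.comap p.subtype (p ⊓ LinearMap.ker g)) =
      finrank K (p ⊓ LinearMap.ker g : Submodule K V) :=
    (Submodule.comapSubtypeEquivOfLe inf_le_left).finrank_eq
  rw [hcomap, he] at h
  exact h

lemma Hlem {V W1 W2 : Type*} [AddCommGroup V] [Module K V] [AddCommGroup W1] [Module K W1]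
    [AddCommGroup W2] [Module K W2] [FiniteDimensional K V] [FiniteDimensional K W1]
    [FiniteDimensional K W2]
    (Φ : V →ₗ[K] W1) (Ψ : V →ₗ[K] W2) (U U1 : Submodule K V)
    (h1 : U1 ≤ U) (h0 : U1 ≤ LinearMap.ker Φ) :
    finrank K (U.map Φ) + finrank K (U1.map Ψ) ≤ finrank K (U.map (Φ.prod Ψ)) := by
  set M := U.map (Φ.prod Ψ) with hM
  have step1 : M.map (LinearMap.fst K W1 W2) = U.map Φ := by
    rw [hM, ← Submodule.map_comp]
    congr 1
  have step2 : U1.map (Φ.prod Ψ) ≤ M ⊓ LinearMap.ker (LinearMap.fst K W1 W2) := by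
    refine le_inf (Submodule.map_mono h1) ?_
    rintro x ⟨v, hv, rfl⟩
    simp [LinearMap.mem_ker.mp (h0 hv)]
  have step3 : finrank K (U1.map Ψ) ≤ finrank K (U1.map (Φ.prod Ψ)) := by
    have h' : (U1.map (Φ.prod Ψ)).map (LinearMap.snd K W1 W2) = U1.map Ψ := by
      rw [← Submodule.map_comp]; congr 1
    rw [← h']
    exact Submodule.finrank_map_le _ _
  have step4 := rankNullity (K := K) M (LinearMap.fst K W1 W2)
  have step5 : finrank K (U1.map (Φ.prod Ψ)) ≤
      finrank K (M ⊓ LinearMap.ker (LinearMap.fst K W1 W2) : Submodule K (W1 × W2)) :=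
    Submodule.finrank_mono step2
  rw [step1] at step4
  omega

open Module

def monf {m : ℕ} (A : Finset (Fin m)) : (Fin m → ZMod 2) → ZMod 2 := fun x => ∏ i ∈ A, x i

def msp (m : ℕ) (S : Finset (Fin m)) (r : ℕ) :
    Submodule (ZMod 2) ((Fin m → ZMod 2) → ZMod 2) :=
  Submodule.span (ZMod 2) (monf '' {A : Finset (Fin m) | A ⊆ S ∧ A.card ≤ r})

def resF {m : ℕ} (T : Finset (Fin m → ZMod 2)) :
    ((Fin m → ZMod 2) → ZMod 2) →ₗ[ZMod 2] ({x // x ∈ T} → ZMod 2) :=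
  LinearMap.funLeft (ZMod 2) (ZMod 2) (fun t => t.1)

lemma rankPosF {m : ℕ} (S : Finset (Fin m)) (r : ℕ) (T : Finset (Fin m → ZMod 2))
    (hT : T.Nonempty) : 1 ≤ finrank (ZMod 2) ((msp m S r).map (resF T)) := by
  obtain ⟨x, hx⟩ := hT
  have hmem : monf (∅ : Finset (Fin m)) ∈ msp m S r :=
    Submodule.subset_span ⟨∅, ⟨Finset.empty_subset _, by simp⟩, rfl⟩
  have hv : resF T (monf (∅ : Finset (Fin m))) ∈ (msp m S r).map (resF T) :=
    Submodule.mem_map_of_mem hmem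
  have hvne : resF T (monf (∅ : Finset (Fin m))) ≠ 0 := by
    intro h
    have := congrFun h ⟨x, hx⟩
    simp [resF, monf, LinearMap.funLeft] at this
  calc (1:ℕ) = finrank (ZMod 2) (Submodule.span (ZMod 2) {resF T (monf (∅ : Finset (Fin m)))}) :=
        (finrank_span_singleton hvne).symm
    _ ≤ finrank (ZMod 2) ((msp m S r).map (resF T)) := by
        apply Submodule.finrank_mono
        rw [Submodule.span_singleton_le_iff_mem]
        exact hv

/-- multiplication by (z i + c) as a linear map -/
def mulChi {m : ℕ} (i : Fin m) (c : ZMod 2) :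
    ((Fin m → ZMod 2) → ZMod 2) →ₗ[ZMod 2] ((Fin m → ZMod 2) → ZMod 2) where
  toFun := fun u z => (z i + c) * u z
  map_add' := by intro u v; funext z; simp [mul_add]
  map_smul' := by intro a u; funext z; simp [smul_eq_mul]; ring

lemma geom (m : ℕ) : ∀ t r (S : Finset (Fin m)) (T : Finset (Fin m → ZMod 2)),
    T.card = t →
    (∀ x ∈ T, ∀ y ∈ T, (∀ i ∈ S, x i = y i) → x = y) →
    f r t ≤ finrank (ZMod 2) ((msp m S r).map (resF T)) := by
  intro t
  induction t using Nat.strong_induction_on with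
  | _ t ih =>
    intro r S T hcard hinj
    rcases Nat.eq_zero_or_pos t with rfl | ht
    · rw [f_zero]; exact Nat.zero_le _
    have hTne : T.Nonempty := Finset.card_pos.mp (by omega)
    cases r with
    | zero => exact le_trans (f_zero_le_one t) (rankPosF S 0 T hTne)
    | succ r' =>
      rcases eq_or_lt_of_le (show 1 ≤ t from ht) with h1 | ht2
      · rw [← h1, f_one]; exact rankPosF S (r'+1) T hTne
      -- t ≥ 2
      obtain ⟨x, hx, y, hy, hxy⟩ := Finset.one_lt_card.mp (by omega : 1 < T.card)
      obtain ⟨i, hiS, hine⟩ : ∃ i ∈ S, x i ≠ y i := by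
        by_contra h
        push_neg at h
        exact hxy (hinj x hx y hy h)
      -- choose the big side value cb
      obtain ⟨cb, hle⟩ : ∃ cb : ZMod 2,
          (T.filter (fun z => z i = cb + 1)).card ≤ (T.filter (fun z => z i = cb)).card := by
        rcases le_total ((T.filter (fun z => z i = (1:ZMod 2))).card)
            ((T.filter (fun z => z i = (0:ZMod 2))).card) with h | h
        · exact ⟨0, by simpa using h⟩
        · refine ⟨1, ?_⟩
          have e : (1:ZMod 2) + 1 = 0 := by decide
          rw [e]; exact h
      set Tb := T.filter (fun z => z i = cb) with hTb
      set Ts := T.filter (fun z => z i = cb + 1) with hTs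
      have hsum : Tb.card + Ts.card = t := by
        rw [← hcard, hTb, hTs]
        have := Finset.card_filter_add_card_filter_not
          (s := T) (p := fun z => z i = cb)
        rw [← this]
        congr 1
        refine congrArg Finset.card (Finset.filter_congr ?_)
        intro z hz
        have h2 : ∀ a c : ZMod 2, a = c + 1 ↔ ¬(a = c) := by decide
        exact h2 _ _
      have hbne : ∃ z ∈ T, z i = cb := by
        have : ∀ a b c : ZMod 2, a ≠ b → (a = c ∨ b = c) := by decide
        rcases this (x i) (y i) cb hine with h | h
        · exact ⟨x, hx, h⟩
        · exact ⟨y, hy, h⟩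
      have hsne : ∃ z ∈ T, z i = cb + 1 := by
        have : ∀ a b c : ZMod 2, a ≠ b → (a = c ∨ b = c) := by decide
        rcases this (x i) (y i) (cb+1) hine with h | h
        · exact ⟨x, hx, h⟩
        · exact ⟨y, hy, h⟩
      have hb1 : 1 ≤ Tb.card := by
        obtain ⟨z, hz, hzc⟩ := hbne
        exact Finset.card_pos.mpr ⟨z, Finset.mem_filter.mpr ⟨hz, hzc⟩⟩
      have hs1 : 1 ≤ Ts.card := by
        obtain ⟨z, hz, hzc⟩ := hsne
        exact Finset.card_pos.mpr ⟨z, Finset.mem_filter.mpr ⟨hz, hzc⟩⟩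
      set S' := S.erase i with hS'
      have hinj' : ∀ c : ZMod 2, ∀ x' ∈ T.filter (fun z => z i = c),
          ∀ y' ∈ T.filter (fun z => z i = c), (∀ j ∈ S', x' j = y' j) → x' = y' := by
        intro c x' hx' y' hy' hagree
        rw [Finset.mem_filter] at hx' hy'
        apply hinj x' hx'.1 y' hy'.1
        intro j hj
        by_cases hji : j = i
        · rw [hji, hx'.2, hy'.2]
        · exact hagree j (Finset.mem_erase.mpr ⟨hji, hj⟩)
      have IH1 : f (r'+1) Tb.card ≤ finrank (ZMod 2) ((msp m S' (r'+1)).map (resF Tb)) :=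
        ih Tb.card (by omega) (r'+1) S' Tb rfl (hinj' cb)
      have IH2 : f r' Ts.card ≤ finrank (ZMod 2) ((msp m S' r').map (resF Ts)) :=
        ih Ts.card (by omega) r' S' Ts rfl (hinj' (cb+1))
      have hA : f (r'+1) t ≤ f (r'+1) Tb.card + f r' Ts.card := by
        have := claimA t r' Tb.card Ts.card (by omega) hle
        rw [hsum] at this
        exact this
      -- linear algebra
      set U := msp m S (r'+1) with hU
      set U1 := (msp m S' r').map (mulChi i cb) with hU1
      have K1 : msp m S' (r'+1) ≤ U := by
        apply Submodule.span_mono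
        apply Set.image_mono
        intro A hA
        exact ⟨hA.1.trans (Finset.erase_subset i S), hA.2⟩
      have K2 : U1 ≤ U := by
        rw [hU1, msp, Submodule.map_span]
        rw [Submodule.span_le]
        rintro _ ⟨_, ⟨A, ⟨hAS', hAc⟩, rfl⟩, rfl⟩
        have hiA : i ∉ A := fun h => Finset.notMem_erase i S (hAS' h)
        have heq : mulChi i cb (monf A) = monf (insert i A) + cb • monf A := by
          funext z
          simp only [mulChi, LinearMap.coe_mk, AddHom.coe_mk, monf, Pi.add_apply, Pi.smul_apply,
            smul_eq_mul]
          rw [Finset.prod_insert hiA]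
          ring
        rw [heq]
        apply Submodule.add_mem
        · apply Submodule.subset_span
          refine ⟨insert i A, ⟨?_, ?_⟩, rfl⟩
          · intro j hj
            rcases Finset.mem_insert.mp hj with rfl | hj'
            · exact hiS
            · exact Finset.erase_subset i S (hAS' hj')
          · rw [Finset.card_insert_of_notMem hiA]; omega
        · apply Submodule.smul_mem
          apply Submodule.subset_span
          exact ⟨A, ⟨hAS'.trans (Finset.erase_subset i S), by omega⟩, rfl⟩
      have K3 : (resF Ts).comp (mulChi i cb) = resF Ts := by
        apply LinearMap.ext
        intro u
        funext ⟨z, hz⟩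
        have hzi : z i = cb + 1 := (Finset.mem_filter.mp hz).2
        simp only [LinearMap.comp_apply, mulChi, LinearMap.coe_mk, AddHom.coe_mk, resF,
          LinearMap.funLeft_apply]
        rw [hzi]
        have : cb + 1 + cb = 1 := by
          have : ∀ c : ZMod 2, c + 1 + c = 1 := by decide
          exact this cb
        rw [this, one_mul]
      have K0 : (resF Tb).comp (mulChi i cb) = 0 := by
        apply LinearMap.ext
        intro u
        funext ⟨z, hz⟩
        have hzi : z i = cb := (Finset.mem_filter.mp hz).2
        simp only [LinearMap.comp_apply, mulChi, LinearMap.coe_mk, AddHom.coe_mk, resF,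
          LinearMap.funLeft_apply, LinearMap.zero_apply, Pi.zero_apply]
        rw [hzi]
        have : cb + cb = 0 := by
          have : ∀ c : ZMod 2, c + c = 0 := by decide
          exact this cb
        rw [this, zero_mul]
      have h0 : U1 ≤ LinearMap.ker (resF Tb) := by
        rintro _ ⟨u, hu, rfl⟩
        rw [LinearMap.mem_ker, ← LinearMap.comp_apply, K0]
        rfl
      have hmain := Hlem (K := ZMod 2) (resF Tb) (resF Ts) U U1 K2 h0
      have hL1 : f (r'+1) Tb.card ≤ finrank (ZMod 2) (U.map (resF Tb)) :=
        le_trans IH1 (Submodule.finrank_mono (Submodule.map_mono K1))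
      have hL2 : f r' Ts.card ≤ finrank (ZMod 2) (U1.map (resF Ts)) := by
        have : U1.map (resF Ts) = (msp m S' r').map (resF Ts) := by
          rw [hU1, ← Submodule.map_comp, K3]
        rw [this]
        exact IH2
      -- upper bound
      have hR : finrank (ZMod 2) (U.map ((resF Tb).prod (resF Ts)))
          ≤ finrank (ZMod 2) (U.map (resF T)) := by
        have hπ : (resF Tb).prod (resF Ts) =
            ((LinearMap.funLeft (ZMod 2) (ZMod 2)
                (fun z : {x // x ∈ Tb} => (⟨z.1, Finset.mem_of_mem_filter z.1 z.2⟩ : {x // x ∈ T}))).prod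
             (LinearMap.funLeft (ZMod 2) (ZMod 2)
                (fun z : {x // x ∈ Ts} => (⟨z.1, Finset.mem_of_mem_filter z.1 z.2⟩ : {x // x ∈ T})))).comp
              (resF T) := by
          apply LinearMap.ext; intro u; rfl
        rw [hπ, Submodule.map_comp]
        exact Submodule.finrank_map_le _ _
      calc f (r'+1) t ≤ f (r'+1) Tb.card + f r' Ts.card := hA
        _ ≤ finrank (ZMod 2) (U.map (resF Tb)) + finrank (ZMod 2) (U1.map (resF Ts)) :=
            Nat.add_le_add hL1 hL2
        _ ≤ finrank (ZMod 2) (U.map ((resF Tb).prod (resF Ts))) := hmain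
        _ ≤ finrank (ZMod 2) (U.map (resF T)) := hR

lemma bitRepr_injective (m : ℕ) : Function.Injective (fun s : Fin (2^m) => bitRepr m (s:ℕ)) := by
  intro s s' h
  apply Fin.ext
  apply Nat.eq_of_testBit_eq
  intro i
  by_cases hi : i < m
  · have h2 := congrFun h ⟨m-1-i, by omega⟩
    simp only [bitRepr] at h2
    have e : m - 1 - (m-1-i) = i := by omega
    rw [e] at h2
    cases hb : Nat.testBit s.1 i <;> cases hb' : Nat.testBit s'.1 i <;>
      rw [hb, hb'] at h2 <;> simp_all
  · rw [Nat.testBit_eq_false_of_lt, Nat.testBit_eq_false_of_lt]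
    · calc (s'.1 : ℕ) < 2^m := s'.2
        _ ≤ 2^i := Nat.pow_le_pow_right (by norm_num) (by omega)
    · calc (s.1 : ℕ) < 2^m := s.2
        _ ≤ 2^i := Nat.pow_le_pow_right (by norm_num) (by omega)

/-- pullback along bitRepr -/
def Emap (m : ℕ) : ((Fin m → ZMod 2) → ZMod 2) →ₗ[ZMod 2] (Fin (2^m) → ZMod 2) :=
  LinearMap.funLeft (ZMod 2) (ZMod 2) (fun s : Fin (2^m) => bitRepr m (s:ℕ))

lemma zmod2_pow_self (a : ZMod 2) {n : ℕ} (hn : n ≠ 0) : a ^ n = a := by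
  have : a = 0 ∨ a = 1 := by revert a; decide
  rcases this with rfl | rfl
  · exact zero_pow hn
  · exact one_pow n

lemma card_support_le_sum (d : Fin m →₀ ℕ) : d.support.card ≤ d.sum (fun _ n => n) := by
  rw [Finset.card_eq_sum_ones, Finsupp.sum]
  apply Finset.sum_le_sum
  intro i hi
  have := Finsupp.mem_support_iff.mp hi
  omega

lemma evalFun_mem (m r : ℕ) (p : MvPolynomial (Fin m) (ZMod 2)) (hp : p.totalDegree ≤ r) :
    (fun x => MvPolynomial.aeval x p) ∈ msp m Finset.univ r := by
  have hrepr : (fun x => MvPolynomial.aeval x p)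
      = ∑ d ∈ p.support, (MvPolynomial.coeff d p) • monf d.support := by
    funext x
    conv_lhs => rw [← MvPolynomial.support_sum_monomial_coeff p]
    rw [map_sum]
    rw [Finset.sum_apply]
    apply Finset.sum_congr rfl
    intro d hd
    rw [MvPolynomial.aeval_monomial]
    have h2 : (d.prod fun i k => x i ^ k) = ∏ i ∈ d.support, x i := by
      rw [Finsupp.prod]
      exact Finset.prod_congr rfl (fun i hi => zmod2_pow_self (x i) (Finsupp.mem_support_iff.mp hi))
    rw [h2]
    simp [monf, smul_eq_mul, Algebra.algebraMap_self_apply]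
  rw [hrepr]
  apply Submodule.sum_mem
  intro d hd
  apply Submodule.smul_mem
  apply Submodule.subset_span
  refine ⟨d.support, ⟨Finset.subset_univ _, ?_⟩, rfl⟩
  calc d.support.card ≤ d.sum (fun _ n => n) := card_support_le_sum d
    _ ≤ p.totalDegree := MvPolynomial.le_totalDegree hd
    _ ≤ r := hp

lemma Emap_monf_eq (m : ℕ) (A : Finset (Fin m)) :
    Emap m (monf A) = evalRM m (∏ i ∈ A, MvPolynomial.X i) := by
  funext s
  simp only [Emap, LinearMap.funLeft_apply, monf, evalRM, LinearMap.pi_apply,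
    AlgHom.toLinearMap_apply, map_prod, MvPolynomial.aeval_X]

lemma UE_eq_RM (m r : ℕ) : (msp m Finset.univ r).map (Emap m) = RM m r := by
  apply le_antisymm
  · rw [msp, Submodule.map_span, Submodule.span_le]
    rintro _ ⟨_, ⟨A, ⟨-, hAc⟩, rfl⟩, rfl⟩
    rw [Emap_monf_eq]
    apply Submodule.mem_map_of_mem
    rw [MvPolynomial.mem_restrictTotalDegree]
    calc (∏ i ∈ A, MvPolynomial.X i : MvPolynomial (Fin m) (ZMod 2)).totalDegree
        ≤ ∑ i ∈ A, (MvPolynomial.X i : MvPolynomial (Fin m) (ZMod 2)).totalDegree :=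
          MvPolynomial.totalDegree_finset_prod A _
      _ = A.card := by simp [MvPolynomial.totalDegree_X]
      _ ≤ r := hAc
  · rintro _ ⟨p, hp, rfl⟩
    have : evalRM m p = Emap m (fun x => MvPolynomial.aeval x p) := by
      funext s
      simp [Emap, evalRM, LinearMap.funLeft_apply]
    rw [this]
    exact Submodule.mem_map_of_mem
      (evalFun_mem m r p ((MvPolynomial.mem_restrictTotalDegree _ r p).mp hp))

lemma card_filter_card_le (m r : ℕ) :
    (Finset.univ.filter (fun A : Finset (Fin m) => A.card ≤ r)).card
      = ∑ i ∈ Finset.range (r+1), m.choose i := by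
  have hset : Finset.univ.filter (fun A : Finset (Fin m) => A.card ≤ r)
      = (Finset.range (r+1)).biUnion (fun i => Finset.powersetCard i Finset.univ) := by
    ext A
    simp only [Finset.mem_filter, Finset.mem_univ, true_and, Finset.mem_biUnion,
      Finset.mem_range, Finset.mem_powersetCard, Finset.subset_univ]
    constructor
    · intro h; exact ⟨A.card, by omega, by simp⟩
    · rintro ⟨i, hi, -, rfl⟩; omega
  rw [hset, Finset.card_biUnion]
  · apply Finset.sum_congr rfl
    intro i hi
    rw [Finset.card_powersetCard, Finset.card_univ, Fintype.card_fin]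
  · intro a ha b hb hab
    rw [Function.onFun, Finset.disjoint_left]
    intro A hA hB
    rw [Finset.mem_powersetCard] at hA hB
    exact hab (hA.2.symm.trans hB.2)

lemma finrank_msp_le (m r : ℕ) :
    finrank (ZMod 2) (msp m Finset.univ r) ≤ ∑ i ∈ Finset.range (r+1), m.choose i := by
  have hb : msp m Finset.univ r
      = Submodule.span (ZMod 2)
          (Set.range (fun A : {A : Finset (Fin m) // A.card ≤ r} => monf A.1)) := by
    rw [msp]; congr 1; ext v
    simp only [Set.mem_image, Set.mem_setOf_eq, Set.mem_range, Subtype.exists]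
    constructor
    · rintro ⟨A, ⟨-, hc⟩, rfl⟩; exact ⟨A, hc, rfl⟩
    · rintro ⟨A, hc, rfl⟩; exact ⟨A, ⟨Finset.subset_univ _, hc⟩, rfl⟩
  rw [hb]
  calc finrank (ZMod 2) (Submodule.span (ZMod 2)
          (Set.range (fun A : {A : Finset (Fin m) // A.card ≤ r} => monf A.1)))
      ≤ Fintype.card {A : Finset (Fin m) // A.card ≤ r} := finrank_range_le_card _
    _ = (Finset.univ.filter (fun A : Finset (Fin m) => A.card ≤ r)).card :=
        Fintype.card_subtype _
    _ = ∑ i ∈ Finset.range (r+1), m.choose i := card_filter_card_le m r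

/-- Let g ∈ RM(m,r) have Hamming weight w ≥ 2^{m−u} (0 ≤ u ≤ m). Then the
number of codewords h ∈ RM(m,r) with supp(g) ⊆ supp(h) is at most
2^{C(m,≤r) − C(m−u,≤r)}. -/
theorem stmt18 (m r u : ℕ) (hm : 1 ≤ m) (hr : r ≤ m) (hu : u ≤ m)
    (g : Fin (2 ^ m) → ZMod 2) (hg : g ∈ RM m r)
    (hw : 2 ^ (m - u) ≤ hammingNorm g) :
    {h : Fin (2 ^ m) → ZMod 2 | h ∈ RM m r ∧ ∀ s : Fin (2 ^ m), g s = 1 → h s = 1}.ncard ≤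
      2 ^ ((∑ i ∈ Finset.range (r + 1), m.choose i) -
            ∑ i ∈ Finset.range (r + 1), (m - u).choose i) := by
  set k := ∑ i ∈ Finset.range (r + 1), m.choose i with hk
  set κ := ∑ i ∈ Finset.range (r + 1), (m-u).choose i with hκ
  set Tg : Finset (Fin (2^m)) := Finset.univ.filter (fun j => g j ≠ 0) with hTg
  have hham : hammingNorm g = Tg.card := rfl
  set resg : (Fin (2^m) → ZMod 2) →ₗ[ZMod 2] ({x // x ∈ Tg} → ZMod 2) :=
    LinearMap.funLeft (ZMod 2) (ZMod 2) (fun t => t.1) with hresg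
  set C0 : Submodule (ZMod 2) (Fin (2^m) → ZMod 2) := RM m r ⊓ LinearMap.ker resg with hC0
  set Sset := {h : Fin (2 ^ m) → ZMod 2 | h ∈ RM m r ∧ ∀ s : Fin (2 ^ m), g s = 1 → h s = 1}
    with hSset
  have hzmod : ∀ a : ZMod 2, a ≠ 0 → a = 1 := by decide
  -- Step 1 : injection into C0
  have hsub : (fun h => h + g) '' Sset ⊆ (C0 : Set _) := by
    rintro _ ⟨h, hh, rfl⟩
    rw [SetLike.mem_coe, hC0, Submodule.mem_inf]
    refine ⟨Submodule.add_mem _ hh.1 hg, ?_⟩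
    rw [LinearMap.mem_ker]
    funext jj
    obtain ⟨j, hj⟩ := jj
    have hgj : g j = 1 := hzmod _ ((Finset.mem_filter.mp hj).2)
    have hhj : h j = 1 := hh.2 j hgj
    simp only [hresg, LinearMap.funLeft_apply, Pi.add_apply, Pi.zero_apply]
    rw [hgj, hhj]
    exact (by decide : (1:ZMod 2) + 1 = 0)
  have hstep1 : Sset.ncard ≤ Nat.card C0 := by
    have hinj : Set.InjOn (fun h => h + g) Sset := by
      intro a _ b _ hab
      exact add_left_injective g hab
    calc Sset.ncard = ((fun h => h + g) '' Sset).ncard := (Set.ncard_image_of_injOn hinj).symm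
      _ ≤ (C0 : Set _).ncard := Set.ncard_le_ncard hsub (Set.toFinite _)
      _ = Nat.card C0 := (Nat.card_coe_set_eq _).symm
  have hfin : Fintype (↥C0) := Fintype.ofFinite _
  have hstep2 : Nat.card C0 = 2 ^ finrank (ZMod 2) C0 := by
    rw [Nat.card_eq_fintype_card, card_eq_pow_finrank (K := ZMod 2) (V := ↥C0), ZMod.card 2]
  -- Step 3 : rank bounds
  have hRN := rankNullity (K := ZMod 2) (RM m r) resg
  rw [← hC0] at hRN
  have hUB : finrank (ZMod 2) (RM m r) ≤ k := by
    rw [← UE_eq_RM m r]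
    calc finrank (ZMod 2) ((msp m Finset.univ r).map (Emap m))
        ≤ finrank (ZMod 2) (msp m Finset.univ r) := Submodule.finrank_map_le _ _
      _ ≤ k := finrank_msp_le m r
  set T' : Finset (Fin m → ZMod 2) := Tg.image (fun s : Fin (2^m) => bitRepr m (s:ℕ)) with hT'
  have hcardT' : T'.card = Tg.card := Finset.card_image_of_injective _ (bitRepr_injective m)
  have hgeo : f r T'.card ≤ finrank (ZMod 2) ((msp m Finset.univ r).map (resF T')) := by
    apply geom m T'.card r Finset.univ T' rfl
    intro x _ y _ hagree
    funext i
    exact hagree i (Finset.mem_univ i)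
  have hκf : κ ≤ f r T'.card := by
    calc κ ≤ f r (2^(m-u)) := f_pow_two r (m-u)
      _ ≤ f r T'.card := f_mono_t r (by rw [hcardT', ← hham]; exact hw)
  have θsurj : Function.Surjective (fun j : {x // x ∈ Tg} =>
      (⟨bitRepr m (j.1:ℕ), Finset.mem_image_of_mem _ j.2⟩ : {x // x ∈ T'})) := by
    rintro ⟨z, hz⟩
    obtain ⟨j, hj, rfl⟩ := Finset.mem_image.mp hz
    exact ⟨⟨j, hj⟩, rfl⟩
  set ι := LinearMap.funLeft (ZMod 2) (ZMod 2) (fun j : {x // x ∈ Tg} =>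
    (⟨bitRepr m (j.1:ℕ), Finset.mem_image_of_mem _ j.2⟩ : {x // x ∈ T'})) with hι
  have hι_inj : Function.Injective ι := LinearMap.funLeft_injective_of_surjective _ _ _ θsurj
  have hcomp : ι.comp (resF T') = resg.comp (Emap m) := by
    apply LinearMap.ext; intro u; rfl
  have htransfer : finrank (ZMod 2) ((msp m Finset.univ r).map (resF T'))
      = finrank (ZMod 2) ((RM m r).map resg) := by
    rw [(Submodule.equivMapOfInjective ι hι_inj _).finrank_eq]
    rw [← Submodule.map_comp, hcomp, Submodule.map_comp, UE_eq_RM]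
  have hLB : κ ≤ finrank (ZMod 2) ((RM m r).map resg) := by
    rw [← htransfer]; exact le_trans hκf hgeo
  have hC0le : finrank (ZMod 2) C0 ≤ k - κ := by omega
  calc Sset.ncard ≤ Nat.card C0 := hstep1
    _ = 2 ^ finrank (ZMod 2) C0 := hstep2
    _ ≤ 2 ^ (k - κ) := Nat.pow_le_pow_right (by norm_num) hC0le
end
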